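/- arXiv:1512.04432 — 5 statements merged into one kernel-verified Lean document; each statement's English description precedes it below -/
import Mathlib

section
/- The generalized Borel transform intertwines the Farey transfer operator with M + N: for all φ ∈ L²(m) and x ∈ (0,1], (1/(1+x)²)·ℬ[φ](x/(1+x)) = ℬ[Mφ](x) and (1/(1+x)²)·ℬ[φ](1/(1+x)) = ℬ[Nφ](x), where (Mφ)(t) = e^{-t}φ(t) and (Nφ)(t) = ∫₀^∞ J₁(2√(st)) (st)^{-1/2} φ(s) dm(s), with J₁ the Bessel function of the first kind of order 1. -/
open Set MeasureTheory Real
open scoped NNReal ENNReal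

/-- The measure `dm(t) = t e^{-t} dt` on `(0,∞)`. -/
noncomputable def mMeasure : Measure ℝ :=
  (volume.restrict (Ioi (0:ℝ))).withDensity (fun t => ENNReal.ofReal (t * Real.exp (-t)))

/-- The Bessel function of the first kind of order `1`, via its power series. -/
noncomputable def besselJ1 (z : ℝ) : ℝ :=
  ∑' k : ℕ, (-1)^k / (k.factorial * (k+1).factorial) * (z/2)^(2*k+1)

/-- The generalized Borel transform `ℬ[φ](x) = x⁻² ∫₀^∞ e^{-t/x} eᵗ φ(t) dm(t)`. -/
noncomputable def borelT (φ : ℝ → ℝ) (x : ℝ) : ℝ :=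
  (1/x^2) * ∫ t in Ioi (0:ℝ), Real.exp (-t/x) * Real.exp t * φ t ∂mMeasure

/-- The integral operator `N`. -/
noncomputable def opN (φ : ℝ → ℝ) (t : ℝ) : ℝ :=
  ∫ s in Ioi (0:ℝ), besselJ1 (2 * Real.sqrt (s*t)) * Real.sqrt (1/(s*t)) * φ s ∂mMeasure

/-! ### Generalities on the measure `m` -/

lemma mMeasure_eq : mMeasure = (volume.restrict (Ioi (0:ℝ))).withDensity
    (fun t => (((t * Real.exp (-t)).toNNReal : ℝ≥0) : ℝ≥0∞)) := rfl

lemma hdMeas : Measurable fun t : ℝ => (t * Real.exp (-t)).toNNReal :=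
  (measurable_id.mul (Real.measurable_exp.comp measurable_neg)).real_toNNReal

lemma integral_mMeasure (f : ℝ → ℝ) :
    ∫ t in Ioi (0:ℝ), f t ∂mMeasure = ∫ t in Ioi (0:ℝ), (t * Real.exp (-t)) * f t := by
  rw [mMeasure_eq, setIntegral_withDensity_eq_setIntegral_smul hdMeas f measurableSet_Ioi,
    Measure.restrict_restrict measurableSet_Ioi, inter_self]
  refine setIntegral_congr_fun measurableSet_Ioi (fun t ht => ?_)
  have h0 : (0:ℝ) ≤ t * Real.exp (-t) := le_of_lt (mul_pos ht (Real.exp_pos _))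
  simp [NNReal.smul_def, Real.coe_toNNReal _ h0]

lemma ae_mMeasure_mem : ∀ᵐ t ∂mMeasure, t ∈ Ioi (0:ℝ) :=
  (withDensity_absolutelyContinuous _ _).ae_le (ae_restrict_mem measurableSet_Ioi)

lemma integrable_mMeasure_iff {f : ℝ → ℝ} : Integrable f mMeasure ↔
    IntegrableOn (fun t => (t * Real.exp (-t)) * f t) (Ioi 0) volume := by
  rw [mMeasure_eq, integrable_withDensity_iff_integrable_smul hdMeas]
  refine integrable_congr ?_
  filter_upwards [ae_restrict_mem measurableSet_Ioi] with t ht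
  have h0 : (0:ℝ) ≤ t * Real.exp (-t) := le_of_lt (mul_pos ht (Real.exp_pos _))
  simp [NNReal.smul_def, Real.coe_toNNReal _ h0]

lemma volRestrict_ac : volume.restrict (Ioi (0:ℝ)) ≪ mMeasure := by
  rw [mMeasure]
  refine withDensity_absolutelyContinuous'
    ((measurable_id.mul (Real.measurable_exp.comp measurable_neg)).ennreal_ofReal).aemeasurable ?_
  filter_upwards [ae_restrict_mem measurableSet_Ioi] with t ht
  have h0 : (0:ℝ) < t * Real.exp (-t) := mul_pos ht (Real.exp_pos _)
  simp [ENNReal.ofReal_eq_zero, not_le, h0]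

/-! ### The Bessel function: integral representation and bound -/

lemma summable_aux (c : ℝ) : Summable (fun k : ℕ => c^(2*k+1) / (2*k+1).factorial) := by
  have h := Real.summable_pow_div_factorial c
  exact h.comp_injective (fun a b hab => by omega)

lemma wallis_prod (n : ℕ) :
    ∏ i ∈ Finset.range n, (2*(i:ℝ)+1)/(2*i+2) = (2*n).factorial / (4^n * (n.factorial)^2) := by
  induction n with
  | zero => simp
  | succ k ih =>
    rw [Finset.prod_range_succ, ih]
    have h1 : (2*(k+1)).factorial = (2*k+2) * ((2*k+1) * (2*k).factorial) := by
      have : 2*(k+1) = (2*k+1)+1 := by ring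
      rw [this, Nat.factorial_succ, Nat.factorial_succ]
    have h2 : (k+1).factorial = (k+1) * k.factorial := Nat.factorial_succ k
    rw [h1, h2]
    have hk : (k.factorial : ℝ) ≠ 0 := by positivity
    have hk2 : ((2*k).factorial : ℝ) ≠ 0 := by positivity
    push_cast
    field_simp
    ring

lemma besselJ1_coeff (k : ℕ) (z : ℝ) :
    (1/π) * ((-1)^k * z^(2*k+1) / (2*k+1).factorial *
      (π * ((2*(k+1)).factorial / (4^(k+1) * (((k+1).factorial : ℝ))^2)))) =
    (-1)^k / (k.factorial * (k+1).factorial) * (z/2)^(2*k+1) := by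
  have h1 : (2*(k+1)).factorial = (2*k+2) * (2*k+1).factorial := by
    have : 2*(k+1) = (2*k+1)+1 := by ring
    rw [this, Nat.factorial_succ]
  have h2 : (k+1).factorial = (k+1) * k.factorial := Nat.factorial_succ k
  have h4 : (4:ℝ)^(k+1) = 2^(2*k+1) * 2 := by
    have : (4:ℝ) = 2^2 := by norm_num
    rw [this, ← pow_mul]
    rw [show 2*(k+1) = (2*k+1)+1 by ring, pow_succ]
  have hf1 : ((2*k+1).factorial : ℝ) ≠ 0 := by positivity
  have hf2 : (k.factorial : ℝ) ≠ 0 := by positivity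
  rw [h1, h2, h4, div_pow]
  push_cast
  have h2' : (2:ℝ)^(2*k+1) ≠ 0 := by positivity
  field_simp

lemma integral_sin_pow_eq (k : ℕ) :
    ∫ θ in Set.Ioc 0 π, (Real.sin θ)^(2*(k+1)) =
      π * ((2*(k+1)).factorial / (4^(k+1) * (((k+1).factorial : ℝ))^2)) := by
  rw [← intervalIntegral.integral_of_le Real.pi_pos.le, integral_sin_pow_even, wallis_prod]

lemma volume_Ioc_pi : volume (Set.Ioc (0:ℝ) π) < ⊤ := by
  rw [Real.volume_Ioc]; exact ENNReal.ofReal_lt_top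

lemma besselJ1_rep (z : ℝ) :
    besselJ1 z = (1/π) * ∫ θ in Set.Ioc 0 π, Real.sin θ * Real.sin (z * Real.sin θ) := by
  set F : ℕ → ℝ → ℝ := fun k θ =>
    (-1)^k * z^(2*k+1) / (2*k+1).factorial * (Real.sin θ)^(2*(k+1)) with hF
  have hpt : ∀ θ, Real.sin θ * Real.sin (z * Real.sin θ) = ∑' k, F k θ := by
    intro θ
    rw [Real.sin_eq_tsum (z * Real.sin θ), ← tsum_mul_left]
    refine tsum_congr fun k => ?_
    simp only [hF, mul_pow]
    ring
  have hint : ∀ k, IntegrableOn (F k) (Set.Ioc 0 π) volume := fun k =>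
    (Continuous.integrableOn_Ioc (by fun_prop))
  have hb : ∀ k, ∀ θ, ‖F k θ‖ ≤ |z|^(2*k+1)/(2*k+1).factorial := by
    intro k θ
    have h1 : ‖F k θ‖ = |z|^(2*k+1)/(2*k+1).factorial * |Real.sin θ|^(2*(k+1)) := by
      simp only [hF, Real.norm_eq_abs, abs_mul, abs_div, abs_pow, abs_neg, abs_one, one_pow,
        one_mul, Nat.abs_cast]
    rw [h1]
    have h2 : |Real.sin θ|^(2*(k+1)) ≤ 1 :=
      pow_le_one₀ (abs_nonneg _) (Real.abs_sin_le_one θ)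
    have h3 : (0:ℝ) ≤ |z|^(2*k+1)/(2*k+1).factorial := by positivity
    nlinarith
  have hsum : Summable fun k => ∫ θ in Set.Ioc 0 π, ‖F k θ‖ := by
    refine Summable.of_nonneg_of_le (fun k => integral_nonneg fun θ => norm_nonneg _)
      (fun k => ?_) (((summable_aux |z|).mul_left π))
    have h1 : ∫ θ in Set.Ioc 0 π, ‖F k θ‖ ≤ ∫ _θ in Set.Ioc 0 π, |z|^(2*k+1)/(2*k+1).factorial := by
      refine setIntegral_mono_on (hint k).norm ?_ measurableSet_Ioc (fun θ _ => hb k θ)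
      exact integrableOn_const volume_Ioc_pi.ne
    have h2 : ∫ _θ in Set.Ioc 0 π, (|z|^(2*k+1)/(2*k+1).factorial : ℝ) =
        π * (|z|^(2*k+1)/(2*k+1).factorial) := by
      rw [setIntegral_const, measureReal_def, Real.volume_Ioc, smul_eq_mul, sub_zero,
        ENNReal.toReal_ofReal Real.pi_pos.le]
    linarith [h1, h2.le]
  calc besselJ1 z
      = ∑' k, (1/π) * ((-1)^k * z^(2*k+1) / (2*k+1).factorial *
          (π * ((2*(k+1)).factorial / (4^(k+1) * (((k+1).factorial : ℝ))^2)))) :=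
        (tsum_congr fun k => (besselJ1_coeff k z).symm)
    _ = (1/π) * ∑' k, ((-1)^k * z^(2*k+1) / (2*k+1).factorial *
          (π * ((2*(k+1)).factorial / (4^(k+1) * (((k+1).factorial : ℝ))^2)))) := tsum_mul_left
    _ = (1/π) * ∑' k, ∫ θ in Set.Ioc 0 π, F k θ := by
        congr 1
        refine tsum_congr fun k => ?_
        rw [← integral_sin_pow_eq k, hF]
        exact (integral_const_mul _ _).symm
    _ = (1/π) * ∫ θ in Set.Ioc 0 π, ∑' k, F k θ := by
        rw [integral_tsum_of_summable_integral_norm hint hsum]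
    _ = (1/π) * ∫ θ in Set.Ioc 0 π, Real.sin θ * Real.sin (z * Real.sin θ) := by
        congr 1
        exact integral_congr_ae (Filter.Eventually.of_forall fun θ => (hpt θ).symm)

lemma abs_besselJ1_le_one (z : ℝ) : |besselJ1 z| ≤ 1 := by
  rw [besselJ1_rep]
  have h : ‖∫ θ in Set.Ioc 0 π, Real.sin θ * Real.sin (z * Real.sin θ)‖ ≤
      1 * (volume (Set.Ioc (0:ℝ) π)).toReal := by
    refine norm_setIntegral_le_of_norm_le_const volume_Ioc_pi fun θ _ => ?_
    rw [Real.norm_eq_abs, abs_mul]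
    exact mul_le_one₀ (Real.abs_sin_le_one _) (abs_nonneg _) (Real.abs_sin_le_one _)
  rw [Real.volume_Ioc, sub_zero, ENNReal.toReal_ofReal Real.pi_pos.le, one_mul] at h
  rw [abs_mul, abs_div, abs_one, abs_of_pos Real.pi_pos]
  rw [Real.norm_eq_abs] at h
  calc 1/π * |∫ θ in Set.Ioc 0 π, Real.sin θ * Real.sin (z * Real.sin θ)|
      ≤ 1/π * π := mul_le_mul_of_nonneg_left h (by positivity)
    _ = 1 := by field_simp

lemma continuous_besselJ1 : Continuous besselJ1 := by
  have h : Continuous fun z => (1/π) * ∫ θ in Set.Ioc 0 π, Real.sin θ * Real.sin (z * Real.sin θ) := by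
    refine continuous_const.mul ?_
    refine continuous_of_dominated (bound := fun _ => (1:ℝ)) (fun z => ?_) (fun z => ?_) ?_ ?_
    · exact (Continuous.aestronglyMeasurable (by fun_prop))
    · exact Filter.Eventually.of_forall fun θ => by
        rw [Real.norm_eq_abs, abs_mul]
        exact mul_le_one₀ (Real.abs_sin_le_one _) (abs_nonneg _) (Real.abs_sin_le_one _)
    · exact (integrableOn_const volume_Ioc_pi.ne)
    · exact Filter.Eventually.of_forall fun θ => by fun_prop
  have heq : besselJ1 = fun z => (1/π) * ∫ θ in Set.Ioc 0 π, Real.sin θ * Real.sin (z * Real.sin θ) :=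
    funext besselJ1_rep
  rw [heq]; exact h

/-! ### The Laplace transform of `√t · J₁(2√(st))` -/

lemma real_exp_eq_tsum (y : ℝ) : Real.exp y = ∑' n : ℕ, y^n / n.factorial := by
  rw [Real.exp_eq_exp_ℝ, NormedSpace.exp_eq_tsum_div]

lemma integrableOn_pow_mul_exp (k : ℕ) {x : ℝ} (hx : 0 < x) :
    IntegrableOn (fun t => t^(k+1) * Real.exp (-(1/x) * t)) (Ioi 0) volume := by
  have h := integrableOn_rpow_mul_exp_neg_mul_rpow
    (p := 1) (s := (k+1 : ℝ)) (b := 1/x) (by linarith [Nat.cast_nonneg (α := ℝ) k]) one_pos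
    (by positivity)
  refine h.congr_fun (fun t ht => ?_) measurableSet_Ioi
  dsimp only
  rw [Real.rpow_one, show ((k:ℝ)+1) = ((k+1 : ℕ) : ℝ) by push_cast; ring,
    Real.rpow_natCast]

lemma integral_pow_mul_exp (k : ℕ) {x : ℝ} (hx : 0 < x) :
    ∫ t in Ioi (0:ℝ), t^(k+1) * Real.exp (-(1/x) * t)
      = (k+1).factorial * x^(k+2) := by
  have h := integral_rpow_mul_exp_neg_mul_Ioi (a := (k:ℝ)+2) (r := 1/x)
    (by positivity) (by positivity)
  have heq : ∫ t in Ioi (0:ℝ), t^(k+1) * Real.exp (-(1/x) * t)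
      = ∫ t in Ioi (0:ℝ), t ^ ((k:ℝ)+2-1) * Real.exp (-(1/x * t)) := by
    refine setIntegral_congr_fun measurableSet_Ioi (fun t ht => ?_)
    rw [show ((k:ℝ)+2-1) = ((k+1 : ℕ) : ℝ) by push_cast; ring, Real.rpow_natCast,
      neg_mul]
  rw [heq, h]
  have h1 : (1:ℝ)/(1/x) = x := by field_simp
  have h2 : Real.Gamma ((k:ℝ)+2) = (k+1).factorial := by
    rw [show ((k:ℝ)+2) = ((k+1 : ℕ) : ℝ)+1 by push_cast; ring,
      Real.Gamma_nat_eq_factorial]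
  rw [h1, h2, show ((k:ℝ)+2) = ((k+2 : ℕ) : ℝ) by push_cast; ring, Real.rpow_natCast]
  ring

lemma laplace_besselJ1 {s x : ℝ} (hs : 0 < s) (hx : 0 < x) :
    ∫ t in Ioi (0:ℝ), Real.exp (-(1/x) * t) * (Real.sqrt t * besselJ1 (2 * Real.sqrt (s*t)))
      = Real.sqrt s * x^2 * Real.exp (-(s*x)) := by
  set F : ℕ → ℝ → ℝ := fun k t =>
    ((-1)^k / (k.factorial * (k+1).factorial) * (s^k * Real.sqrt s))
      * (t^(k+1) * Real.exp (-(1/x)*t)) with hF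
  have hpt : ∀ t ∈ Ioi (0:ℝ),
      Real.exp (-(1/x) * t) * (Real.sqrt t * besselJ1 (2 * Real.sqrt (s*t)))
        = ∑' k, F k t := by
    intro t ht
    have ht' : (0:ℝ) < t := ht
    have hst : (0:ℝ) ≤ s * t := by positivity
    have hbes : besselJ1 (2*Real.sqrt (s*t)) = ∑' k,
        (-1)^k / (k.factorial * (k+1).factorial) * (Real.sqrt (s*t))^(2*k+1) := by
      rw [besselJ1]
      refine tsum_congr fun k => ?_
      rw [mul_div_cancel_left₀ _ (two_ne_zero)]
    rw [hbes, ← tsum_mul_left, ← tsum_mul_left]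
    refine tsum_congr fun k => ?_
    have h1 : (Real.sqrt (s*t))^(2*k+1) = (s*t)^k * Real.sqrt (s*t) := by
      rw [pow_succ, pow_mul, Real.sq_sqrt hst]
    have h2 : Real.sqrt (s*t) = Real.sqrt s * Real.sqrt t := Real.sqrt_mul hs.le t
    have h3 : Real.sqrt t * Real.sqrt t = t := Real.mul_self_sqrt ht'.le
    rw [h1, h2, hF]
    calc Real.exp (-(1/x) * t) * (Real.sqrt t *
          ((-1)^k / (k.factorial * (k+1).factorial) * ((s*t)^k * (Real.sqrt s * Real.sqrt t))))
        = ((-1)^k / (k.factorial * (k+1).factorial) * (s^k * Real.sqrt s))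
            * ((Real.sqrt t * Real.sqrt t) * t^k * Real.exp (-(1/x)*t)) := by
          rw [mul_pow]; ring
      _ = ((-1)^k / (k.factorial * (k+1).factorial) * (s^k * Real.sqrt s))
            * (t^(k+1) * Real.exp (-(1/x)*t)) := by rw [h3]; ring
  have hint : ∀ k, IntegrableOn (F k) (Ioi 0) volume := fun k =>
    (integrableOn_pow_mul_exp k hx).const_mul _
  have hnorm : ∀ k, ∫ t in Ioi (0:ℝ), ‖F k t‖
      = (s^k * Real.sqrt s / (k.factorial * (k+1).factorial))
          * ((k+1).factorial * x^(k+2)) := by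
    intro k
    have heq : ∫ t in Ioi (0:ℝ), ‖F k t‖
        = ∫ t in Ioi (0:ℝ), (s^k * Real.sqrt s / (k.factorial * (k+1).factorial))
            * (t^(k+1) * Real.exp (-(1/x)*t)) := by
      refine setIntegral_congr_fun measurableSet_Ioi (fun t ht => ?_)
      have ht' : (0:ℝ) < t := ht
      simp only [hF, Real.norm_eq_abs, abs_mul, abs_div, abs_pow, abs_neg, abs_one, one_pow,
        Nat.abs_cast, abs_of_pos ht', Real.abs_exp, abs_of_pos hs,
        abs_of_nonneg (Real.sqrt_nonneg s)]
      ring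
    rw [heq, MeasureTheory.integral_const_mul, integral_pow_mul_exp k hx]
  have hsum : Summable fun k => ∫ t in Ioi (0:ℝ), ‖F k t‖ := by
    refine Summable.of_nonneg_of_le (fun k => integral_nonneg fun t => norm_nonneg _)
      (fun k => ?_) (((Real.summable_pow_div_factorial (s*x)).mul_left (Real.sqrt s * x^2)))
    rw [hnorm k]
    have hfk : (k.factorial : ℝ) ≠ 0 := by positivity
    have hfk1 : ((k+1).factorial : ℝ) ≠ 0 := by positivity
    refine le_of_eq ?_
    rw [mul_pow]
    field_simp
    ring
  calc ∫ t in Ioi (0:ℝ), Real.exp (-(1/x) * t) * (Real.sqrt t * besselJ1 (2 * Real.sqrt (s*t)))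
      = ∫ t in Ioi (0:ℝ), ∑' k, F k t :=
        setIntegral_congr_fun measurableSet_Ioi (fun t ht => hpt t ht)
    _ = ∑' k, ∫ t in Ioi (0:ℝ), F k t :=
        (integral_tsum_of_summable_integral_norm hint hsum).symm
    _ = ∑' k, (Real.sqrt s * x^2) * ((-(s*x))^k / k.factorial) := by
        refine tsum_congr fun k => ?_
        rw [hF, MeasureTheory.integral_const_mul, integral_pow_mul_exp k hx]
        have hfk : (k.factorial : ℝ) ≠ 0 := by positivity
        have hfk1 : ((k+1).factorial : ℝ) ≠ 0 := by positivity
        have hneg : (-(s*x))^k = (-1)^k * (s^k * x^k) := by rw [neg_pow, mul_pow]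
        rw [hneg]
        field_simp
        ring
    _ = Real.sqrt s * x^2 * Real.exp (-(s*x)) := by
        rw [tsum_mul_left, real_exp_eq_tsum]

/-! ### `L²` facts -/

lemma mem_sqrt_inv_L2 : MemLp (fun s : ℝ => Real.sqrt (1/s)) 2 mMeasure := by
  have hmeas : AEStronglyMeasurable (fun s : ℝ => Real.sqrt (1/s)) mMeasure :=
    (Real.continuous_sqrt.measurable.comp
      (measurable_const.div measurable_id)).aestronglyMeasurable
  rw [memLp_two_iff_integrable_sq hmeas]
  have h1 : Integrable (fun s : ℝ => 1/s) mMeasure := by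
    rw [integrable_mMeasure_iff]
    have h2 : IntegrableOn (fun t : ℝ => Real.exp (-1 * t)) (Ioi 0) volume :=
      exp_neg_integrableOn_Ioi 0 one_pos
    refine h2.congr_fun (fun t ht => ?_) measurableSet_Ioi
    have ht' : (0:ℝ) < t := ht
    field_simp
  refine h1.congr ?_
  filter_upwards [ae_mMeasure_mem] with s hs
  have hs' : (0:ℝ) < s := hs
  rw [Real.sq_sqrt (by positivity)]

lemma key_s_integrable {φ : ℝ → ℝ} (hφ : MemLp φ 2 mMeasure) :
    Integrable (fun s => Real.sqrt (1/s) * φ s) mMeasure := by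
  have h := MemLp.smul (p := 2) (q := 2) (r := 1) hφ mem_sqrt_inv_L2
  rw [memLp_one_iff_integrable] at h
  exact h

lemma key_s_integrableOn {φ : ℝ → ℝ} (hφ : MemLp φ 2 mMeasure) :
    IntegrableOn (fun s => Real.sqrt s * Real.exp (-s) * φ s) (Ioi 0) volume := by
  have h := (integrable_mMeasure_iff).mp (key_s_integrable hφ)
  refine h.congr_fun (fun s hs => ?_) measurableSet_Ioi
  have hs' : (0:ℝ) < s := hs
  have h1 : Real.sqrt (1/s) = 1 / Real.sqrt s := by
    rw [one_div, one_div, Real.sqrt_inv]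
  dsimp only
  rw [h1]
  have h2 : s * (1 / Real.sqrt s) = Real.sqrt s := by
    rw [mul_one_div, Real.div_sqrt]
  calc s * Real.exp (-s) * (1/Real.sqrt s * φ s)
      = (s * (1/Real.sqrt s)) * Real.exp (-s) * φ s := by ring
    _ = Real.sqrt s * Real.exp (-s) * φ s := by rw [h2]

lemma integrableOn_exp_sqrt {x : ℝ} (hx : 0 < x) :
    IntegrableOn (fun t => Real.exp (-(1/x)*t) * Real.sqrt t) (Ioi 0) volume := by
  have h := integrableOn_rpow_mul_exp_neg_mul_rpow
    (p := 1) (s := (1/2 : ℝ)) (b := 1/x) (by norm_num) one_pos (by positivity)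
  refine h.congr_fun (fun t ht => ?_) measurableSet_Ioi
  have ht' : (0:ℝ) < t := ht
  dsimp only
  rw [Real.rpow_one, ← Real.sqrt_eq_rpow, mul_comm]

/-- The Borel transform intertwines the two branches of the Farey transfer operator
with the operators `M` and `N` on `L²(m)`. -/
theorem borel_intertwines (φ : ℝ → ℝ) (hφ : MemLp φ 2 mMeasure)
    (x : ℝ) (hx : x ∈ Ioc (0:ℝ) 1) :
    (1/(1+x)^2) * borelT φ (x/(1+x)) = borelT (fun t => Real.exp (-t) * φ t) x ∧
    (1/(1+x)^2) * borelT φ (1/(1+x)) = borelT (opN φ) x := by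
  obtain ⟨hx0, hx1⟩ := hx
  have h1x : (0:ℝ) < 1 + x := by linarith
  have hxne : x ≠ 0 := ne_of_gt hx0
  have h1xne : (1:ℝ) + x ≠ 0 := ne_of_gt h1x
  constructor
  · -- First conjunct
    rw [borelT, borelT]
    have hI : (∫ t in Ioi (0:ℝ), Real.exp (-t/(x/(1+x))) * Real.exp t * φ t ∂mMeasure)
        = ∫ t in Ioi (0:ℝ), Real.exp (-t/x) * Real.exp t * ((fun t => Real.exp (-t) * φ t) t)
            ∂mMeasure := by
      refine integral_congr_ae (Filter.Eventually.of_forall fun t => ?_)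
      have harg : -t/(x/(1+x)) = -t/x + -t := by field_simp; ring
      have hexp : Real.exp (-t/(x/(1+x))) * Real.exp t
          = Real.exp (-t/x) * Real.exp t * Real.exp (-t) := by
        rw [← Real.exp_add, ← Real.exp_add, ← Real.exp_add, harg]
        congr 1
        ring
      calc Real.exp (-t/(x/(1+x))) * Real.exp t * φ t
          = Real.exp (-t/x) * Real.exp t * Real.exp (-t) * φ t := by rw [hexp]
        _ = Real.exp (-t/x) * Real.exp t * (Real.exp (-t) * φ t) := by ring
    rw [hI]
    have hc : (1/(1+x)^2) * (1/(x/(1+x))^2) = 1/x^2 := by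
      field_simp
    rw [← mul_assoc, hc]
  · -- Second conjunct
    rw [borelT, borelT]
    -- The left-hand side
    have hc2 : (1/(1+x)^2) * ((1:ℝ)/(1/(1+x))^2) = 1 := by field_simp
    have hLHS : (1/(1+x)^2) * ((1/(1/(1+x))^2) *
        ∫ t in Ioi (0:ℝ), Real.exp (-t/(1/(1+x))) * Real.exp t * φ t ∂mMeasure)
        = ∫ u in Ioi (0:ℝ), (u * Real.exp (-u)) * (Real.exp (-(u*x)) * φ u) := by
      rw [← mul_assoc, hc2, one_mul]
      have hJ : (∫ t in Ioi (0:ℝ), Real.exp (-t/(1/(1+x))) * Real.exp t * φ t ∂mMeasure)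
          = ∫ t in Ioi (0:ℝ), Real.exp (-(t*x)) * φ t ∂mMeasure := by
        refine integral_congr_ae (Filter.Eventually.of_forall fun t => ?_)
        have hexp : Real.exp (-t/(1/(1+x))) * Real.exp t = Real.exp (-(t*x)) := by
          rw [← Real.exp_add]
          congr 1
          field_simp
          ring
        show Real.exp (-t/(1/(1+x))) * Real.exp t * φ t = Real.exp (-(t*x)) * φ t
        rw [hexp]
      rw [hJ, integral_mMeasure]
    rw [hLHS]
    -- The right-hand side via Fubini
    set P : ℝ → ℝ → ℝ := fun t s =>
      Real.exp (-(1/x)*t) * t * ((s*Real.exp (-s)) *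
        (besselJ1 (2*Real.sqrt (s*t)) * Real.sqrt (1/(s*t)) * φ s)) with hP
    have hφmeas' : AEStronglyMeasurable φ (volume.restrict (Ioi 0)) :=
      hφ.1.mono_ac volRestrict_ac
    -- integrability of the double integrand
    have hPmeas : AEStronglyMeasurable (Function.uncurry P)
        ((volume.restrict (Ioi (0:ℝ))).prod (volume.restrict (Ioi (0:ℝ)))) := by
      have hφm : AEStronglyMeasurable (fun p : ℝ × ℝ => φ p.2)
          ((volume.restrict (Ioi (0:ℝ))).prod (volume.restrict (Ioi (0:ℝ)))) :=
        hφmeas'.comp_quasiMeasurePreserving Measure.quasiMeasurePreserving_snd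
      have hm1 : Measurable (fun p : ℝ × ℝ => Real.exp (-(1/x)*p.1) * p.1) := by fun_prop
      have hm2 : Measurable (fun p : ℝ × ℝ => p.2 * Real.exp (-p.2)) := by fun_prop
      have hm3 : Measurable (fun p : ℝ × ℝ => besselJ1 (2*Real.sqrt (p.2*p.1))) := by
        exact (continuous_besselJ1.measurable).comp (by fun_prop)
      have hm4 : Measurable (fun p : ℝ × ℝ => Real.sqrt (1/(p.2*p.1))) := by
        exact Real.continuous_sqrt.measurable.comp
          (measurable_const.div (measurable_snd.mul measurable_fst))
      exact (hm1.aestronglyMeasurable).mul ((hm2.aestronglyMeasurable).mul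
        (((hm3.mul hm4).aestronglyMeasurable).mul hφm))
    have hG : Integrable (fun p : ℝ × ℝ =>
        (Real.exp (-(1/x)*p.1) * Real.sqrt p.1) * ‖Real.sqrt p.2 * Real.exp (-p.2) * φ p.2‖)
        ((volume.restrict (Ioi (0:ℝ))).prod (volume.restrict (Ioi (0:ℝ)))) :=
      Integrable.mul_prod (integrableOn_exp_sqrt hx0) (key_s_integrableOn hφ).norm
    have hPInt : Integrable (Function.uncurry P)
        ((volume.restrict (Ioi (0:ℝ))).prod (volume.restrict (Ioi (0:ℝ)))) := by
      refine hG.mono' hPmeas ?_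
      rw [Measure.prod_restrict]
      filter_upwards [ae_restrict_mem (measurableSet_Ioi.prod measurableSet_Ioi)] with p hp
      obtain ⟨hpt, hps⟩ := hp
      have ht' : (0:ℝ) < p.1 := hpt
      have hs' : (0:ℝ) < p.2 := hps
      have e0 : (1:ℝ)/(p.2*p.1) = (Real.sqrt p.2)⁻¹^2 * (Real.sqrt p.1)⁻¹^2 := by
        rw [inv_pow, inv_pow, Real.sq_sqrt hs'.le, Real.sq_sqrt ht'.le]
        field_simp
      have e1 : Real.sqrt (1/(p.2*p.1)) = (Real.sqrt p.2)⁻¹ * (Real.sqrt p.1)⁻¹ := by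
        rw [e0, Real.sqrt_mul (by positivity), Real.sqrt_sq (by positivity),
          Real.sqrt_sq (by positivity)]
      have e2 : p.1 * (Real.sqrt p.1)⁻¹ = Real.sqrt p.1 := by
        rw [← div_eq_mul_inv, Real.div_sqrt]
      have e3 : p.2 * (Real.sqrt p.2)⁻¹ = Real.sqrt p.2 := by
        rw [← div_eq_mul_inv, Real.div_sqrt]
      have habs : ‖Function.uncurry P p‖
          = (Real.exp (-(1/x)*p.1) * Real.sqrt p.1)
            * ((Real.sqrt p.2 * Real.exp (-p.2)) * ‖φ p.2‖)
            * |besselJ1 (2*Real.sqrt (p.2*p.1))| := by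
        have : Function.uncurry P p = (Real.exp (-(1/x)*p.1) * (p.1 * (Real.sqrt p.1)⁻¹))
            * (((p.2 * (Real.sqrt p.2)⁻¹) * Real.exp (-p.2)) * φ p.2)
            * besselJ1 (2*Real.sqrt (p.2*p.1)) := by
          simp only [Function.uncurry, hP, e1]
          ring
        rw [this, e2, e3, Real.norm_eq_abs, abs_mul, abs_mul]
        rw [abs_of_nonneg (by positivity), abs_mul, abs_of_nonneg (by positivity),
          Real.norm_eq_abs]
      rw [habs]
      have hbb := abs_besselJ1_le_one (2*Real.sqrt (p.2*p.1))
      have hnn : (0:ℝ) ≤ (Real.exp (-(1/x)*p.1) * Real.sqrt p.1)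
          * ((Real.sqrt p.2 * Real.exp (-p.2)) * ‖φ p.2‖) := by positivity
      calc (Real.exp (-(1/x)*p.1) * Real.sqrt p.1)
            * ((Real.sqrt p.2 * Real.exp (-p.2)) * ‖φ p.2‖)
            * |besselJ1 (2*Real.sqrt (p.2*p.1))|
          ≤ (Real.exp (-(1/x)*p.1) * Real.sqrt p.1)
            * ((Real.sqrt p.2 * Real.exp (-p.2)) * ‖φ p.2‖) * 1 :=
            mul_le_mul_of_nonneg_left hbb hnn
        _ = (Real.exp (-(1/x)*p.1) * Real.sqrt p.1)
            * ‖Real.sqrt p.2 * Real.exp (-p.2) * φ p.2‖ := by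
            rw [mul_one, Real.norm_eq_abs, Real.norm_eq_abs, abs_mul,
              abs_of_nonneg (by positivity : (0:ℝ) ≤ Real.sqrt p.2 * Real.exp (-p.2))]
    -- rewrite the right-hand side as a double integral
    have hRHS1 : (∫ t in Ioi (0:ℝ), Real.exp (-t/x) * Real.exp t * opN φ t ∂mMeasure)
        = ∫ t in Ioi (0:ℝ), ∫ s in Ioi (0:ℝ), P t s := by
      rw [integral_mMeasure]
      refine setIntegral_congr_fun measurableSet_Ioi (fun t ht => ?_)
      have ht' : (0:ℝ) < t := ht
      have hopn : opN φ t = ∫ s in Ioi (0:ℝ),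
          (s * Real.exp (-s)) * (besselJ1 (2*Real.sqrt (s*t)) * Real.sqrt (1/(s*t)) * φ s) := by
        rw [opN, integral_mMeasure]
      have hsc : (t*Real.exp (-t)) * (Real.exp (-t/x) * Real.exp t) = Real.exp (-(1/x)*t) * t := by
        have : Real.exp (-t) * (Real.exp (-t/x) * Real.exp t) = Real.exp (-(1/x)*t) := by
          rw [← Real.exp_add, ← Real.exp_add]
          congr 1
          ring
        calc (t*Real.exp (-t)) * (Real.exp (-t/x) * Real.exp t)
            = t * (Real.exp (-t) * (Real.exp (-t/x) * Real.exp t)) := by ring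
          _ = t * Real.exp (-(1/x)*t) := by rw [this]
          _ = Real.exp (-(1/x)*t) * t := by ring
      calc (t*Real.exp (-t)) * (Real.exp (-t/x) * Real.exp t * opN φ t)
          = ((t*Real.exp (-t)) * (Real.exp (-t/x) * Real.exp t)) * opN φ t := by ring
        _ = (Real.exp (-(1/x)*t) * t) * opN φ t := by rw [hsc]
        _ = ∫ s in Ioi (0:ℝ), P t s := by
            rw [hopn, ← MeasureTheory.integral_const_mul]
    rw [hRHS1]
    have hswap : (∫ t in Ioi (0:ℝ), ∫ s in Ioi (0:ℝ), P t s)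
        = ∫ s in Ioi (0:ℝ), ∫ t in Ioi (0:ℝ), P t s :=
      MeasureTheory.integral_integral_swap hPInt
    rw [hswap]
    have hinner : (∫ s in Ioi (0:ℝ), ∫ t in Ioi (0:ℝ), P t s)
        = ∫ s in Ioi (0:ℝ), x^2 * ((s * Real.exp (-s)) * (Real.exp (-(s*x)) * φ s)) := by
      refine setIntegral_congr_fun measurableSet_Ioi (fun s hs => ?_)
      have hs' : (0:ℝ) < s := hs
      have hsqs : Real.sqrt s ≠ 0 := ne_of_gt (Real.sqrt_pos.2 hs')
      have h1 : ∀ t ∈ Ioi (0:ℝ), P t s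
          = ((s*Real.exp (-s)) * φ s * (Real.sqrt s)⁻¹)
            * (Real.exp (-(1/x)*t) * (Real.sqrt t * besselJ1 (2*Real.sqrt (s*t)))) := by
        intro t ht
        have ht' : (0:ℝ) < t := ht
        have e0 : (1:ℝ)/(s*t) = (Real.sqrt s)⁻¹^2 * (Real.sqrt t)⁻¹^2 := by
          rw [inv_pow, inv_pow, Real.sq_sqrt hs'.le, Real.sq_sqrt ht'.le]
          field_simp
        have e1 : Real.sqrt (1/(s*t)) = (Real.sqrt s)⁻¹ * (Real.sqrt t)⁻¹ := by
          rw [e0, Real.sqrt_mul (by positivity), Real.sqrt_sq (by positivity),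
            Real.sqrt_sq (by positivity)]
        have e2 : t * (Real.sqrt t)⁻¹ = Real.sqrt t := by
          rw [← div_eq_mul_inv, Real.div_sqrt]
        calc P t s = ((s*Real.exp (-s)) * φ s * (Real.sqrt s)⁻¹)
              * (Real.exp (-(1/x)*t) * ((t * (Real.sqrt t)⁻¹)
                  * besselJ1 (2*Real.sqrt (s*t)))) := by
              simp only [hP, e1]
              ring
          _ = ((s*Real.exp (-s)) * φ s * (Real.sqrt s)⁻¹)
              * (Real.exp (-(1/x)*t) * (Real.sqrt t * besselJ1 (2*Real.sqrt (s*t)))) := by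
              rw [e2]
      rw [setIntegral_congr_fun measurableSet_Ioi h1, MeasureTheory.integral_const_mul,
        laplace_besselJ1 hs' hx0]
      field_simp
    rw [hinner, MeasureTheory.integral_const_mul, ← mul_assoc]
    rw [show (1:ℝ)/x^2 * x^2 = 1 by field_simp, one_mul]
end

section
/- For all nonnegative integers ν and j, the matrix element of the multiplication operator M in the Laguerre basis satisfies (1/(j+1)) ∫₀^∞ e^{-t} e_ν(t) e_j(t) t e^{-t} dt = C(ν+j+1, ν) / 2^{ν+j+2}. -/
open Set MeasureTheory Real

open Finset

/-- The Laguerre polynomials `e_ν(t) = Σ_{m=0}^{ν} C(ν+1, ν−m) (−t)^m / m!`. -/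
noncomputable def lagE (ν : ℕ) (t : ℝ) : ℝ :=
  ∑ m ∈ Finset.range (ν+1), (Nat.choose (ν+1) (ν-m) : ℝ) * (-t)^m / m.factorial

lemma altH (j : ℕ) : ∀ (n k : ℕ),
    ∑ r ∈ range (n+1), (-1:ℝ)^r * (n.choose r : ℝ) * ((r+k).choose j : ℝ)
      = (-1)^n * (if n ≤ j then ((k.choose (j-n) : ℕ) : ℝ) else 0) := by
  intro n
  induction n with
  | zero => intro k; simp
  | succ n ih =>
    intro k
    have step : ∑ r ∈ range (n+2), (-1:ℝ)^r * ((n+1).choose r : ℝ) * ((r+k).choose j : ℝ)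
        = (∑ r ∈ range (n+1), (-1:ℝ)^r * (n.choose r : ℝ) * ((r+k).choose j : ℝ))
          - ∑ r ∈ range (n+1), (-1:ℝ)^r * (n.choose r : ℝ) * ((r+(k+1)).choose j : ℝ) := by
      rw [Finset.sum_range_succ' (fun r => (-1:ℝ)^r * ((n+1).choose r : ℝ) * ((r+k).choose j : ℝ)) (n+1)]
      have expand : ∀ i, (-1:ℝ)^(i+1) * ((n+1).choose (i+1) : ℝ) * ((i+1+k).choose j : ℝ)
          = (-1:ℝ)^(i+1) * (n.choose (i+1) : ℝ) * ((i+1+k).choose j : ℝ)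
            - (-1:ℝ)^i * (n.choose i : ℝ) * ((i+(k+1)).choose j : ℝ) := by
        intro i
        rw [Nat.choose_succ_succ]
        push_cast
        have : i + 1 + k = i + (k+1) := by ring
        rw [this]
        ring
      rw [Finset.sum_congr rfl (fun i _ => expand i), Finset.sum_sub_distrib]
      have shift : ∑ i ∈ range (n+1), (-1:ℝ)^(i+1) * (n.choose (i+1) : ℝ) * ((i+1+k).choose j : ℝ)
          = (∑ r ∈ range (n+1), (-1:ℝ)^r * (n.choose r : ℝ) * ((r+k).choose j : ℝ))
            - (-1:ℝ)^0 * (n.choose 0 : ℝ) * ((0+k).choose j : ℝ) := by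
        have h2 : ∑ r ∈ range (n+2), (-1:ℝ)^r * (n.choose r : ℝ) * ((r+k).choose j : ℝ)
            = (∑ i ∈ range (n+1), (-1:ℝ)^(i+1) * (n.choose (i+1) : ℝ) * ((i+1+k).choose j : ℝ))
              + (-1:ℝ)^0 * (n.choose 0 : ℝ) * ((0+k).choose j : ℝ) :=
          Finset.sum_range_succ' _ (n+1)
        have h3 : ∑ r ∈ range (n+2), (-1:ℝ)^r * (n.choose r : ℝ) * ((r+k).choose j : ℝ)
            = ∑ r ∈ range (n+1), (-1:ℝ)^r * (n.choose r : ℝ) * ((r+k).choose j : ℝ) := by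
          rw [Finset.sum_range_succ]
          simp [Nat.choose_succ_self]
        rw [h3] at h2
        linarith
      rw [shift]
      simp
      ring
    rw [step, ih k, ih (k+1)]
    by_cases h1 : n + 1 ≤ j
    · have h0 : n ≤ j := by omega
      have hs : j - n = (j - (n+1)) + 1 := by omega
      simp only [if_pos h0, if_pos h1, hs, Nat.choose_succ_succ, Nat.succ_eq_add_one]
      push_cast
      ring
    · by_cases h0 : n ≤ j
      · have hj : j = n := by omega
        subst hj
        simp [h1]
      · simp [h0, h1]


lemma orthoInner (i k : ℕ) :
    ∑ m ∈ range (i+1), (-1:ℝ)^m * ((i+1).choose (m+1) : ℝ) * ((m+k+1).choose (k+1) : ℝ)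
      = (-1)^i * (k.choose i : ℝ) := by
  have h := altH (k+1) (i+1) k
  rw [Finset.sum_range_succ' (fun r => (-1:ℝ)^r * ((i+1).choose r : ℝ) * ((r+k).choose (k+1) : ℝ)) (i+1)] at h
  have h0 : (-1:ℝ)^0 * ((i+1).choose 0 : ℝ) * ((0+k).choose (k+1) : ℝ) = 0 := by
    simp [Nat.choose_eq_zero_of_lt (by omega : k < k + 1)]
  rw [h0, add_zero] at h
  have hcongr : ∀ m ∈ range (i+1),
      (-1:ℝ)^(m+1) * ((i+1).choose (m+1) : ℝ) * ((m+1+k).choose (k+1) : ℝ)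
        = -((-1:ℝ)^m * ((i+1).choose (m+1) : ℝ) * ((m+k+1).choose (k+1) : ℝ)) := by
    intro m _
    have : m + 1 + k = m + k + 1 := by ring
    rw [this]; ring
  rw [Finset.sum_congr rfl hcongr, Finset.sum_neg_distrib] at h
  have hrhs : (-1:ℝ)^(i+1) * (if i + 1 ≤ k + 1 then ((k.choose (k+1-(i+1)) : ℕ) : ℝ) else 0)
      = (-1:ℝ)^(i+1) * (k.choose i : ℝ) := by
    by_cases hik : i ≤ k
    · rw [if_pos (by omega)]
      congr 2
      have : k + 1 - (i+1) = k - i := by omega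
      rw [this, Nat.choose_symm hik]
    · rw [if_neg (by omega), Nat.choose_eq_zero_of_lt (by omega), Nat.cast_zero, mul_zero]
  rw [hrhs] at h
  have hfin : ∑ m ∈ range (i+1), (-1:ℝ)^m * ((i+1).choose (m+1) : ℝ) * ((m+k+1).choose (k+1) : ℝ)
      = -((-1:ℝ)^(i+1) * (k.choose i : ℝ)) := by linarith
  rw [hfin]; ring

-- L3 : delta sum


lemma deltaSum (l i : ℕ) :
    ∑ k ∈ range (l+1), (-1:ℝ)^k * (l.choose k : ℝ) * (k.choose i : ℝ)
      = if l = i then (-1:ℝ)^l else 0 := by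
  have h := altH i l 0
  simp only [add_zero] at h
  rw [h]
  by_cases hli : l ≤ i
  · by_cases he : l = i
    · subst he; simp
    · rw [if_pos hli, if_neg he]
      have : i - l ≠ 0 := by omega
      rw [Nat.choose_eq_zero_of_lt (by omega : (0:ℕ) < i - l)]
      simp
  · rw [if_neg hli, if_neg (by omega)]
    simp


lemma factdiv (m k : ℕ) :
    (((m+k+1).factorial : ℝ)) / ((m.factorial : ℝ) * (k.factorial : ℝ))
      = ((k:ℝ)+1) * ((m+k+1).choose (k+1) : ℝ) := by
  have h : (m+k+1).choose (k+1) * (k+1).factorial * m.factorial = (m+k+1).factorial := by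
    have := Nat.choose_mul_factorial_mul_factorial (show k+1 ≤ m+k+1 by omega)
    have hsub : m + k + 1 - (k+1) = m := by omega
    rwa [hsub] at this
  have hm : (m.factorial : ℝ) ≠ 0 := Nat.cast_ne_zero.mpr (Nat.factorial_ne_zero m)
  have hk : (k.factorial : ℝ) ≠ 0 := Nat.cast_ne_zero.mpr (Nat.factorial_ne_zero k)
  rw [div_eq_iff (by positivity)]
  have hr : (((m+k+1).choose (k+1) * (k+1).factorial * m.factorial : ℕ) : ℝ)
      = ((m+k+1).factorial : ℝ) := by exact_mod_cast congrArg Nat.cast h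
  rw [← hr, Nat.factorial_succ]
  push_cast
  ring


lemma ortho (i l : ℕ) :
    ∑ m ∈ range (i+1), ∑ k ∈ range (l+1),
        (-1:ℝ)^(m+k) * ((i+1).choose (m+1) : ℝ) * ((l+1).choose (k+1) : ℝ)
          * ((m+k+1).factorial : ℝ) / ((m.factorial : ℝ) * (k.factorial : ℝ))
      = if i = l then ((i:ℝ)+1) else 0 := by
  have hterm : ∀ m k : ℕ,
      (-1:ℝ)^(m+k) * ((i+1).choose (m+1) : ℝ) * ((l+1).choose (k+1) : ℝ)
          * ((m+k+1).factorial : ℝ) / ((m.factorial : ℝ) * (k.factorial : ℝ))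
      = ((-1:ℝ)^k * ((l+1).choose (k+1) : ℝ) * ((k:ℝ)+1))
          * ((-1:ℝ)^m * ((i+1).choose (m+1) : ℝ) * ((m+k+1).choose (k+1) : ℝ)) := by
    intro m k
    rw [mul_div_assoc, factdiv, pow_add]
    ring
  calc ∑ m ∈ range (i+1), ∑ k ∈ range (l+1),
        (-1:ℝ)^(m+k) * ((i+1).choose (m+1) : ℝ) * ((l+1).choose (k+1) : ℝ)
          * ((m+k+1).factorial : ℝ) / ((m.factorial : ℝ) * (k.factorial : ℝ))
      = ∑ k ∈ range (l+1), ((-1:ℝ)^k * ((l+1).choose (k+1) : ℝ) * ((k:ℝ)+1))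
          * ∑ m ∈ range (i+1), (-1:ℝ)^m * ((i+1).choose (m+1) : ℝ) * ((m+k+1).choose (k+1) : ℝ) := by
        rw [Finset.sum_comm]
        refine Finset.sum_congr rfl fun k _ => ?_
        rw [Finset.mul_sum]
        exact Finset.sum_congr rfl fun m _ => hterm m k
    _ = ∑ k ∈ range (l+1), ((-1:ℝ)^k * ((l+1).choose (k+1) : ℝ) * ((k:ℝ)+1))
          * ((-1:ℝ)^i * (k.choose i : ℝ)) :=
        Finset.sum_congr rfl fun k _ => by rw [orthoInner]
    _ = ((-1:ℝ)^i * ((l:ℝ)+1)) * ∑ k ∈ range (l+1), (-1:ℝ)^k * (l.choose k : ℝ) * (k.choose i : ℝ) := by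
        rw [Finset.mul_sum]
        refine Finset.sum_congr rfl fun k _ => ?_
        have hc : ((l:ℝ)+1) * (l.choose k : ℝ) = ((l+1).choose (k+1) : ℝ) * ((k:ℝ)+1) := by
          exact_mod_cast Nat.add_one_mul_choose_eq l k
        linear_combination (-((-1:ℝ)^k * (-1:ℝ)^i * (k.choose i : ℝ))) * hc
    _ = if i = l then ((i:ℝ)+1) else 0 := by
        rw [deltaSum]
        by_cases he : l = i
        · subst he
          rw [if_pos rfl, if_pos rfl]
          have h1 : (-1:ℝ)^l * (-1:ℝ)^l = 1 := by
            rw [← pow_add]; exact Even.neg_one_pow ⟨l, rfl⟩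
          linear_combination ((l:ℝ)+1) * h1
        · rw [if_neg he, if_neg (fun h => he h.symm), mul_zero]


lemma multCoeff (ν m : ℕ) (hm : m ≤ ν) :
    ∑ i ∈ range (ν+1), (ν+1).choose (i+1) * (i+1).choose (m+1)
      = (ν+1).choose (m+1) * 2^(ν-m) := by
  have hsplit : range (ν+1) = Finset.Ico 0 (ν+1) := by rw [Finset.range_eq_Ico]
  rw [hsplit, ← Finset.sum_Ico_consecutive _ (Nat.zero_le m) (by omega : m ≤ ν+1)]
  have h1 : ∑ i ∈ Finset.Ico 0 m, (ν+1).choose (i+1) * (i+1).choose (m+1) = 0 := by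
    apply Finset.sum_eq_zero
    intro i hi
    rw [Finset.mem_Ico] at hi
    rw [Nat.choose_eq_zero_of_lt (by omega : i+1 < m+1), mul_zero]
  rw [h1, zero_add, Finset.sum_Ico_eq_sum_range]
  have h2 : ν + 1 - m = (ν - m) + 1 := by omega
  rw [h2]
  have h3 : ∀ s ∈ range ((ν-m)+1),
      (ν+1).choose (m+s+1) * (m+s+1).choose (m+1)
        = (ν+1).choose (m+1) * (ν-m).choose s := by
    intro s hs
    rw [Finset.mem_range] at hs
    have := Nat.choose_mul (n := ν+1) (show m+1 ≤ m+s+1 by omega)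
    have e1 : ν + 1 - (m+1) = ν - m := by omega
    have e2 : m + s + 1 - (m+1) = s := by omega
    rw [e1, e2] at this
    exact this
  rw [Finset.sum_congr rfl h3, ← Finset.mul_sum, Nat.sum_range_choose]


lemma vdmWrap (ν j : ℕ) :
    ∑ i ∈ range (ν+1), (i+1) * ((ν+1).choose (i+1)) * ((j+1).choose (i+1))
      = (j+1) * (ν+j+1).choose ν := by
  have h1 : ∀ i, (i+1) * ((ν+1).choose (i+1)) * ((j+1).choose (i+1))
      = (j+1) * ((ν+1).choose (i+1) * j.choose i) := by
    intro i
    have := Nat.add_one_mul_choose_eq j i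
    calc (i+1) * ((ν+1).choose (i+1)) * ((j+1).choose (i+1))
        = (ν+1).choose (i+1) * ((j+1).choose (i+1) * (i+1)) := by ring
      _ = (ν+1).choose (i+1) * ((j+1) * j.choose i) := by rw [← this]
      _ = (j+1) * ((ν+1).choose (i+1) * j.choose i) := by ring
  simp only [h1]
  rw [← Finset.mul_sum]
  have h2 : ∀ i ∈ range (ν+1),
      (ν+1).choose (i+1) * j.choose i = (ν+1).choose (ν-i) * j.choose (ν-(ν-i)) := by
    intro i hi
    rw [Finset.mem_range] at hi
    have e1 : ν - (ν - i) = i := by omega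
    have e2 : (ν+1).choose (ν-i) = (ν+1).choose (i+1) := by
      have := Nat.choose_symm (show i+1 ≤ ν+1 by omega)
      have e3 : ν + 1 - (i+1) = ν - i := by omega
      rw [e3] at this
      exact this
    rw [e1, e2]
  rw [Finset.sum_congr rfl h2]
  have h4 : ∑ i ∈ range (ν+1), (ν+1).choose (ν-i) * j.choose (ν-(ν-i))
      = ∑ a ∈ range (ν+1), (ν+1).choose a * j.choose (ν-a) := by
    have := Finset.sum_range_reflect (fun a => (ν+1).choose a * j.choose (ν-a)) (ν+1)
    simp only [Nat.add_sub_cancel] at this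
    exact this
  rw [h4]
  have h5 : (ν+j+1).choose ν = ∑ a ∈ range (ν+1), (ν+1).choose a * j.choose (ν-a) := by
    have := Nat.add_choose_eq (ν+1) j ν
    rw [Finset.Nat.sum_antidiagonal_eq_sum_range_succ_mk] at this
    have e : ν + 1 + j = ν + j + 1 := by ring
    rw [e] at this
    exact this
  rw [h5]


lemma orthoExt (i l M N : ℕ) (hi : i ≤ M) (hl : l ≤ N) :
    ∑ m ∈ range (M+1), ∑ k ∈ range (N+1),
        (-1:ℝ)^(m+k) * ((i+1).choose (m+1) : ℝ) * ((l+1).choose (k+1) : ℝ)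
          * ((m+k+1).factorial : ℝ) / ((m.factorial : ℝ) * (k.factorial : ℝ))
      = if i = l then ((i:ℝ)+1) else 0 := by
  rw [← ortho i l]
  have inner_ext : ∀ m, ∑ k ∈ range (l+1),
      (-1:ℝ)^(m+k) * ((i+1).choose (m+1) : ℝ) * ((l+1).choose (k+1) : ℝ)
          * ((m+k+1).factorial : ℝ) / ((m.factorial : ℝ) * (k.factorial : ℝ))
      = ∑ k ∈ range (N+1),
      (-1:ℝ)^(m+k) * ((i+1).choose (m+1) : ℝ) * ((l+1).choose (k+1) : ℝ)
          * ((m+k+1).factorial : ℝ) / ((m.factorial : ℝ) * (k.factorial : ℝ)) := by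
    intro m
    apply Finset.sum_subset
    · intro x hx; rw [Finset.mem_range] at *; omega
    · intro k hk hk2
      rw [Finset.mem_range, not_lt] at hk2
      rw [Nat.choose_eq_zero_of_lt (by omega : l+1 < k+1)]
      simp
  rw [Finset.sum_congr rfl (fun m _ => inner_ext m)]
  symm
  apply Finset.sum_subset
  · intro x hx; rw [Finset.mem_range] at *; omega
  · intro m hm hm2
    rw [Finset.mem_range, not_lt] at hm2
    apply Finset.sum_eq_zero
    intro k _
    rw [Nat.choose_eq_zero_of_lt (by omega : i+1 < m+1)]
    simp


lemma keyIdentity (ν j : ℕ) :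
    ∑ m ∈ range (ν+1), ∑ k ∈ range (j+1),
        (((ν+1).choose (m+1) : ℝ) * (-1)^m / m.factorial)
          * (((j+1).choose (k+1) : ℝ) * (-1)^k / k.factorial)
          * (((m+k+1).factorial : ℝ) / 2^(m+k+2))
      = ((j:ℝ)+1) * ((ν+j+1).choose ν : ℝ) / 2^(ν+j+2) := by
  have h2 : (2:ℝ)^(ν+j+2) ≠ 0 := by positivity
  rw [eq_div_iff h2, Finset.sum_mul]
  -- step 1: per-(m,k) rewrite into quadruple sum
  have step1 : ∀ m ∈ range (ν+1), (∑ k ∈ range (j+1),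
        (((ν+1).choose (m+1) : ℝ) * (-1)^m / m.factorial)
          * (((j+1).choose (k+1) : ℝ) * (-1)^k / k.factorial)
          * (((m+k+1).factorial : ℝ) / 2^(m+k+2))) * 2^(ν+j+2)
      = ∑ k ∈ range (j+1), ∑ i ∈ range (ν+1), ∑ l ∈ range (j+1),
          ((ν+1).choose (i+1) : ℝ) * ((j+1).choose (l+1) : ℝ)
            * ((-1:ℝ)^(m+k) * ((i+1).choose (m+1) : ℝ) * ((l+1).choose (k+1) : ℝ)
                * ((m+k+1).factorial : ℝ) / ((m.factorial : ℝ) * (k.factorial : ℝ))) := by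
    intro m hm
    rw [Finset.mem_range] at hm
    rw [Finset.sum_mul]
    refine Finset.sum_congr rfl fun k hk => ?_
    rw [Finset.mem_range] at hk
    have hmc : (((ν+1).choose (m+1) * 2^(ν-m) : ℕ) : ℝ)
        = ∑ i ∈ range (ν+1), (((ν+1).choose (i+1) : ℕ) : ℝ) * (((i+1).choose (m+1) : ℕ) : ℝ) := by
      rw [← multCoeff ν m (by omega)]
      push_cast
      rfl
    have hjc : (((j+1).choose (k+1) * 2^(j-k) : ℕ) : ℝ)
        = ∑ l ∈ range (j+1), (((j+1).choose (l+1) : ℕ) : ℝ) * (((l+1).choose (k+1) : ℕ) : ℝ) := by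
      rw [← multCoeff j k (by omega)]
      push_cast
      rfl
    push_cast at hmc hjc
    have hpow : (2:ℝ)^(ν+j+2) = 2^(m+k+2) * (2^(ν-m) * 2^(j-k)) := by
      rw [← pow_add, ← pow_add]
      congr 1
      omega
    rw [hpow]
    have hfac : (m.factorial : ℝ) ≠ 0 := Nat.cast_ne_zero.mpr (Nat.factorial_ne_zero m)
    have hfack : (k.factorial : ℝ) ≠ 0 := Nat.cast_ne_zero.mpr (Nat.factorial_ne_zero k)
    have h2mk : (2:ℝ)^(m+k+2) ≠ 0 := by positivity
    calc (((ν+1).choose (m+1) : ℝ) * (-1)^m / m.factorial)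
          * (((j+1).choose (k+1) : ℝ) * (-1)^k / k.factorial)
          * (((m+k+1).factorial : ℝ) / 2^(m+k+2)) * (2^(m+k+2) * (2^(ν-m) * 2^(j-k)))
        = (((ν+1).choose (m+1) : ℝ) * 2^(ν-m)) * (((j+1).choose (k+1) : ℝ) * 2^(j-k))
            * ((-1:ℝ)^(m+k) * ((m+k+1).factorial : ℝ) / ((m.factorial : ℝ) * (k.factorial : ℝ))) := by
          field_simp
          ring
      _ = (∑ i ∈ range (ν+1), ((ν+1).choose (i+1) : ℝ) * ((i+1).choose (m+1) : ℝ))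
            * (∑ l ∈ range (j+1), ((j+1).choose (l+1) : ℝ) * ((l+1).choose (k+1) : ℝ))
            * ((-1:ℝ)^(m+k) * ((m+k+1).factorial : ℝ) / ((m.factorial : ℝ) * (k.factorial : ℝ))) := by
          rw [← hmc, ← hjc]
      _ = ∑ i ∈ range (ν+1), ∑ l ∈ range (j+1),
          ((ν+1).choose (i+1) : ℝ) * ((j+1).choose (l+1) : ℝ)
            * ((-1:ℝ)^(m+k) * ((i+1).choose (m+1) : ℝ) * ((l+1).choose (k+1) : ℝ)
                * ((m+k+1).factorial : ℝ) / ((m.factorial : ℝ) * (k.factorial : ℝ))) := by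
          rw [Finset.sum_mul_sum, Finset.sum_mul]
          refine Finset.sum_congr rfl fun i _ => ?_
          rw [Finset.sum_mul]
          refine Finset.sum_congr rfl fun l _ => ?_
          ring
  rw [Finset.sum_congr rfl step1]
  -- step 2: commute sums to bring i, l outside
  calc ∑ m ∈ range (ν+1), ∑ k ∈ range (j+1), ∑ i ∈ range (ν+1), ∑ l ∈ range (j+1),
          ((ν+1).choose (i+1) : ℝ) * ((j+1).choose (l+1) : ℝ)
            * ((-1:ℝ)^(m+k) * ((i+1).choose (m+1) : ℝ) * ((l+1).choose (k+1) : ℝ)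
                * ((m+k+1).factorial : ℝ) / ((m.factorial : ℝ) * (k.factorial : ℝ)))
      = ∑ m ∈ range (ν+1), ∑ i ∈ range (ν+1), ∑ k ∈ range (j+1), ∑ l ∈ range (j+1),
          ((ν+1).choose (i+1) : ℝ) * ((j+1).choose (l+1) : ℝ)
            * ((-1:ℝ)^(m+k) * ((i+1).choose (m+1) : ℝ) * ((l+1).choose (k+1) : ℝ)
                * ((m+k+1).factorial : ℝ) / ((m.factorial : ℝ) * (k.factorial : ℝ))) :=
        Finset.sum_congr rfl fun m _ => Finset.sum_comm
    _ = ∑ i ∈ range (ν+1), ∑ m ∈ range (ν+1), ∑ k ∈ range (j+1), ∑ l ∈ range (j+1),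
          ((ν+1).choose (i+1) : ℝ) * ((j+1).choose (l+1) : ℝ)
            * ((-1:ℝ)^(m+k) * ((i+1).choose (m+1) : ℝ) * ((l+1).choose (k+1) : ℝ)
                * ((m+k+1).factorial : ℝ) / ((m.factorial : ℝ) * (k.factorial : ℝ))) :=
        Finset.sum_comm
    _ = ∑ i ∈ range (ν+1), ∑ m ∈ range (ν+1), ∑ l ∈ range (j+1), ∑ k ∈ range (j+1),
          ((ν+1).choose (i+1) : ℝ) * ((j+1).choose (l+1) : ℝ)
            * ((-1:ℝ)^(m+k) * ((i+1).choose (m+1) : ℝ) * ((l+1).choose (k+1) : ℝ)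
                * ((m+k+1).factorial : ℝ) / ((m.factorial : ℝ) * (k.factorial : ℝ))) :=
        Finset.sum_congr rfl fun i _ => Finset.sum_congr rfl fun m _ => Finset.sum_comm
    _ = ∑ i ∈ range (ν+1), ∑ l ∈ range (j+1), ∑ m ∈ range (ν+1), ∑ k ∈ range (j+1),
          ((ν+1).choose (i+1) : ℝ) * ((j+1).choose (l+1) : ℝ)
            * ((-1:ℝ)^(m+k) * ((i+1).choose (m+1) : ℝ) * ((l+1).choose (k+1) : ℝ)
                * ((m+k+1).factorial : ℝ) / ((m.factorial : ℝ) * (k.factorial : ℝ))) :=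
        Finset.sum_congr rfl fun i _ => Finset.sum_comm
    _ = ∑ i ∈ range (ν+1), ∑ l ∈ range (j+1),
          ((ν+1).choose (i+1) : ℝ) * ((j+1).choose (l+1) : ℝ)
            * ∑ m ∈ range (ν+1), ∑ k ∈ range (j+1),
              ((-1:ℝ)^(m+k) * ((i+1).choose (m+1) : ℝ) * ((l+1).choose (k+1) : ℝ)
                * ((m+k+1).factorial : ℝ) / ((m.factorial : ℝ) * (k.factorial : ℝ))) := by
        refine Finset.sum_congr rfl fun i _ => Finset.sum_congr rfl fun l _ => ?_
        rw [Finset.mul_sum]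
        exact Finset.sum_congr rfl fun m _ => (Finset.mul_sum _ _ _).symm
    _ = ∑ i ∈ range (ν+1), ∑ l ∈ range (j+1),
          ((ν+1).choose (i+1) : ℝ) * ((j+1).choose (l+1) : ℝ)
            * (if i = l then ((i:ℝ)+1) else 0) := by
        refine Finset.sum_congr rfl fun i hi => Finset.sum_congr rfl fun l hl => ?_
        rw [Finset.mem_range] at hi hl
        rw [orthoExt i l ν j (by omega) (by omega)]
    _ = ∑ i ∈ range (ν+1), ∑ l ∈ range (j+1),
          (if i = l then ((ν+1).choose (i+1) : ℝ) * ((j+1).choose (l+1) : ℝ) * ((l:ℝ)+1) else 0) := by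
        refine Finset.sum_congr rfl fun i _ => Finset.sum_congr rfl fun l _ => ?_
        split_ifs with h
        · subst h; ring
        · ring
    _ = ∑ i ∈ range (ν+1),
          (if i ∈ range (j+1) then ((ν+1).choose (i+1) : ℝ) * ((j+1).choose (i+1) : ℝ) * ((i:ℝ)+1) else 0) := by
        refine Finset.sum_congr rfl fun i _ => ?_
        exact Finset.sum_ite_eq (range (j+1)) i
          (fun l => ((ν+1).choose (i+1) : ℝ) * ((j+1).choose (l+1) : ℝ) * ((l:ℝ)+1))
    _ = ∑ i ∈ range (ν+1), ((i:ℝ)+1) * ((ν+1).choose (i+1) : ℝ) * ((j+1).choose (i+1) : ℝ) := by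
        refine Finset.sum_congr rfl fun i _ => ?_
        split_ifs with h
        · ring
        · rw [Finset.mem_range, not_lt] at h
          rw [Nat.choose_eq_zero_of_lt (by omega : j+1 < i+1)]
          simp
    _ = ((j:ℝ)+1) * ((ν+j+1).choose ν : ℝ) := by
        have := congrArg (fun n : ℕ => (n : ℝ)) (vdmWrap ν j)
        push_cast at this
        rw [← this]


lemma integral_pow_exp (n : ℕ) :
    ∫ t in Ioi (0:ℝ), t^n * Real.exp (-(2*t)) = (n.factorial : ℝ) / 2^(n+1) := by
  have h := Real.integral_rpow_mul_exp_neg_mul_Ioi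
    (show (0:ℝ) < (n:ℝ)+1 by positivity) (show (0:ℝ) < 2 by norm_num)
  rw [add_sub_cancel_right] at h
  have h1 : ∀ t : ℝ, t ^ (n:ℝ) = t ^ n := fun t => Real.rpow_natCast t n
  simp only [h1] at h
  rw [h]
  rw [Real.Gamma_nat_eq_factorial,
    show ((n:ℝ)+1) = ((n+1 : ℕ) : ℝ) by push_cast; ring, Real.rpow_natCast]
  rw [div_pow, one_pow]
  ring


lemma integrable_pow_exp (n : ℕ) :
    IntegrableOn (fun t : ℝ => t^n * Real.exp (-(2*t))) (Ioi 0) := by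
  have h := integrableOn_rpow_mul_exp_neg_mul_rpow
    (show (-1:ℝ) < (n:ℝ) by exact lt_of_lt_of_le (by norm_num) (Nat.cast_nonneg n)) (show (0:ℝ) < 1 by norm_num) (show (0:ℝ) < 2 by norm_num)
  refine h.congr_fun ?_ measurableSet_Ioi
  intro x hx
  simp only
  rw [Real.rpow_natCast, Real.rpow_one, neg_mul]


/-- Matrix elements of the multiplication operator `(Mφ)(t) = e^{-t}φ(t)` in the
Laguerre basis: `(1/(j+1)) (M e_ν, e_j) = C(ν+j+1, ν)/2^{ν+j+2}`. -/
theorem mult_op_matrix_elements (ν j : ℕ) :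
    (1/(j+1 : ℝ)) * ∫ t in Ioi (0:ℝ),
        (Real.exp (-t) * lagE ν t) * lagE j t * (t * Real.exp (-t))
      = (Nat.choose (ν+j+1) ν : ℝ) / 2^(ν+j+2) := by
  have expand : ∀ t : ℝ, (Real.exp (-t) * lagE ν t) * lagE j t * (t * Real.exp (-t))
      = ∑ m ∈ range (ν+1), ∑ k ∈ range (j+1),
          (((ν+1).choose (ν-m) : ℝ) * (-1)^m / m.factorial)
            * (((j+1).choose (j-k) : ℝ) * (-1)^k / k.factorial)
            * (t^(m+k+1) * Real.exp (-(2*t))) := by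
    intro t
    have hexp : Real.exp (-t) * Real.exp (-t) = Real.exp (-(2*t)) := by
      rw [← Real.exp_add]; congr 1; ring
    calc (Real.exp (-t) * lagE ν t) * lagE j t * (t * Real.exp (-t))
        = (lagE ν t * lagE j t) * (t * (Real.exp (-t) * Real.exp (-t))) := by ring
      _ = (∑ m ∈ range (ν+1), ∑ k ∈ range (j+1),
            (((ν+1).choose (ν-m) : ℝ) * (-t)^m / m.factorial)
              * (((j+1).choose (j-k) : ℝ) * (-t)^k / k.factorial))
            * (t * Real.exp (-(2*t))) := by
          rw [hexp]; unfold lagE; rw [Finset.sum_mul_sum]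
      _ = ∑ m ∈ range (ν+1), ∑ k ∈ range (j+1),
          (((ν+1).choose (ν-m) : ℝ) * (-1)^m / m.factorial)
            * (((j+1).choose (j-k) : ℝ) * (-1)^k / k.factorial)
            * (t^(m+k+1) * Real.exp (-(2*t))) := by
          rw [Finset.sum_mul]
          refine Finset.sum_congr rfl fun m _ => ?_
          rw [Finset.sum_mul]
          refine Finset.sum_congr rfl fun k _ => ?_
          rw [neg_pow t m, neg_pow t k]
          ring
  have hint : ∀ m k : ℕ, Integrable (fun t : ℝ =>
      (((ν+1).choose (ν-m) : ℝ) * (-1)^m / m.factorial)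
        * (((j+1).choose (j-k) : ℝ) * (-1)^k / k.factorial)
        * (t^(m+k+1) * Real.exp (-(2*t)))) (volume.restrict (Ioi 0)) := by
    intro m k
    have := (integrable_pow_exp (m+k+1)).const_mul
      ((((ν+1).choose (ν-m) : ℝ) * (-1)^m / m.factorial)
        * (((j+1).choose (j-k) : ℝ) * (-1)^k / k.factorial))
    exact this
  have hIeq : (∫ t in Ioi (0:ℝ),
        (Real.exp (-t) * lagE ν t) * lagE j t * (t * Real.exp (-t)))
      = ∑ m ∈ range (ν+1), ∑ k ∈ range (j+1),
          (((ν+1).choose (ν-m) : ℝ) * (-1)^m / m.factorial)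
            * (((j+1).choose (j-k) : ℝ) * (-1)^k / k.factorial)
            * (((m+k+1).factorial : ℝ) / 2^(m+k+2)) := by
    rw [MeasureTheory.setIntegral_congr_fun measurableSet_Ioi (fun t _ => expand t)]
    rw [MeasureTheory.integral_finset_sum _
      (fun m _ => integrable_finset_sum _ (fun k _ => hint m k))]
    refine Finset.sum_congr rfl fun m _ => ?_
    rw [MeasureTheory.integral_finset_sum _ (fun k _ => hint m k)]
    refine Finset.sum_congr rfl fun k _ => ?_
    rw [MeasureTheory.integral_const_mul, integral_pow_exp (m+k+1)]
  rw [hIeq]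
  have hchoose : ∀ m ∈ range (ν+1), ∀ k ∈ range (j+1),
      (((ν+1).choose (ν-m) : ℝ) * (-1)^m / m.factorial)
        * (((j+1).choose (j-k) : ℝ) * (-1)^k / k.factorial)
        * (((m+k+1).factorial : ℝ) / 2^(m+k+2))
      = (((ν+1).choose (m+1) : ℝ) * (-1)^m / m.factorial)
        * (((j+1).choose (k+1) : ℝ) * (-1)^k / k.factorial)
        * (((m+k+1).factorial : ℝ) / 2^(m+k+2)) := by
    intro m hm k hk
    rw [Finset.mem_range] at hm hk
    have e1 : (ν+1).choose (ν-m) = (ν+1).choose (m+1) := by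
      have := Nat.choose_symm (show m+1 ≤ ν+1 by omega)
      have e : ν+1-(m+1) = ν-m := by omega
      rw [e] at this; exact this
    have e2 : (j+1).choose (j-k) = (j+1).choose (k+1) := by
      have := Nat.choose_symm (show k+1 ≤ j+1 by omega)
      have e : j+1-(k+1) = j-k := by omega
      rw [e] at this; exact this
    rw [e1, e2]
  rw [Finset.sum_congr rfl (fun m hm => Finset.sum_congr rfl (fun k hk => hchoose m hm k hk))]
  rw [keyIdentity]
  have hj : ((j:ℝ)+1) ≠ 0 := by positivity
  field_simp
end

section
/- For every ν ≥ 0 and k ≥ 1 and t > 0, one has (1/t)∫₀^t s e^{-s} e_ν(s) (t−s)^{k−1} ds = ((ν+1)/(k(k+1))) t^{k} · ₁F₁(ν+2; k+2; −t), where ₁F₁ is the confluent hypergeometric function. -/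
open Set MeasureTheory Real intervalIntegral

/-- The Pochhammer symbol `(a)_n = a(a+1)⋯(a+n−1)` for real `a`. -/
noncomputable def poch (a : ℝ) (n : ℕ) : ℝ := ∏ i ∈ Finset.range n, (a + i)

/-- The Kummer confluent hypergeometric function `₁F₁(a;b;z)`. -/
noncomputable def hyp1F1 (a b z : ℝ) : ℝ :=
  ∑' n : ℕ, poch a n / poch b n * z^n / n.factorial

lemma poch_nat_cast (a n : ℕ) :
    poch ((a : ℝ) + 1) n = (a + n).factorial / a.factorial := by
  induction n with
  | zero => simp [poch, div_self (by positivity : ((a.factorial:ℝ)) ≠ 0)]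
  | succ n ih =>
    rw [poch, Finset.prod_range_succ, ← poch, ih]
    rw [div_mul_eq_mul_div]
    congr 1
    have : (a + (n+1)).factorial = (a + n).factorial * (a + n + 1) := by
      rw [show a + (n+1) = (a+n) + 1 by ring, Nat.factorial_succ]; ring
    rw [this]
    push_cast
    ring

lemma vandermonde_special (ν n : ℕ) :
    ∑ m ∈ Finset.range (ν+1), Nat.choose (ν+1) (ν-m) * Nat.choose n m
      = Nat.choose (ν+n+1) (n+1) := by
  have hsymm : ∀ m ∈ Finset.range (ν+1),
      Nat.choose (ν+1) (ν-m) * Nat.choose n m = Nat.choose (ν+1) (m+1) * Nat.choose n m := by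
    intro m hm
    rw [Finset.mem_range] at hm
    congr 1
    have : ν - m = (ν+1) - (m+1) := by omega
    rw [this, Nat.choose_symm (by omega)]
  rw [Finset.sum_congr rfl hsymm]
  have hv : Nat.choose (ν+1+n) (n+1)
      = ∑ m ∈ Finset.range (n+1), Nat.choose (ν+1) (m+1) * Nat.choose n m := by
    rw [Nat.add_choose_eq, Finset.Nat.sum_antidiagonal_eq_sum_range_succ_mk]
    rw [Finset.sum_range_succ']
    simp only [Nat.choose_zero_right, one_mul]
    rw [Nat.sub_zero, Nat.choose_eq_zero_of_lt (show n < n+1 by omega), add_zero]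
    refine Finset.sum_congr rfl fun m hm => ?_
    rw [Finset.mem_range] at hm
    congr 1
    have : n + 1 - (m + 1) = n - m := by omega
    rw [this, Nat.choose_symm (by omega)]
  have key : ∀ N, ν + 1 ≤ N → n + 1 ≤ N →
      ∑ m ∈ Finset.range (ν+1), Nat.choose (ν+1) (m+1) * Nat.choose n m
        = ∑ m ∈ Finset.range (n+1), Nat.choose (ν+1) (m+1) * Nat.choose n m := by
    intro N h1 h2
    rw [Finset.sum_subset (Finset.range_subset_range.2 h1) (fun m _ hm => by
      rw [Finset.mem_range, not_lt] at hm
      rw [Nat.choose_eq_zero_of_lt (by omega), zero_mul]),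
      Finset.sum_subset (Finset.range_subset_range.2 h2) (fun m _ hm => by
      rw [Finset.mem_range, not_lt] at hm
      rw [Nat.choose_eq_zero_of_lt (show n < m by omega), mul_zero])]
  rw [key (ν+n+1) (by omega) (by omega), ← hv]
  congr 1
  omega

lemma choose_fac (ν n : ℕ) :
    (Nat.choose (ν+n+1) (n+1) : ℝ) * ((n+1).factorial * ν.factorial) = (ν+n+1).factorial := by
  have := Nat.choose_mul_factorial_mul_factorial (show n+1 ≤ ν+n+1 by omega)
  have h2 : ν + n + 1 - (n+1) = ν := by omega
  rw [h2] at this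
  exact_mod_cast by rw [← this]; ring

lemma beta_nat (b : ℕ) : ∀ (a : ℕ) {t : ℝ}, 0 ≤ t →
    ∫ s in (0:ℝ)..t, s^a * (t-s)^b
      = ((a.factorial : ℝ) * b.factorial / (a+b+1).factorial) * t^(a+b+1) := by
  induction b with
  | zero =>
    intro a t _
    simp only [pow_zero, mul_one, Nat.factorial_zero, Nat.cast_one, integral_pow]
    rw [zero_pow (by omega : a + 1 ≠ 0)]
    rw [show a + 0 + 1 = a + 1 by ring, Nat.factorial_succ]
    push_cast
    field_simp
    ring
  | succ b ih =>
    intro a t ht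
    have ha : ((a:ℝ)+1) ≠ 0 := by positivity
    have hu : ∀ x ∈ uIcc (0:ℝ) t, HasDerivAt (fun s => (t-s)^(b+1))
        (-(((b:ℝ)+1) * (t-x)^b)) x := by
      intro x _
      have h1 : HasDerivAt (fun s : ℝ => t - s) (-1) x := (hasDerivAt_id x).const_sub t
      have h2 := h1.pow (b+1)
      refine h2.congr_deriv ?_
      rw [Nat.add_sub_cancel]
      push_cast
      ring
    have hv : ∀ x ∈ uIcc (0:ℝ) t, HasDerivAt (fun s : ℝ => s^(a+1)/((a:ℝ)+1))
        (x^a) x := by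
      intro x _
      have h2 := (hasDerivAt_pow (a+1) x).div_const ((a:ℝ)+1)
      refine h2.congr_deriv ?_
      rw [Nat.add_sub_cancel]
      push_cast
      field_simp
    have hu' : IntervalIntegrable (fun x : ℝ => -(((b:ℝ)+1) * (t-x)^b)) volume 0 t :=
      (Continuous.intervalIntegrable (by continuity) _ _)
    have hv' : IntervalIntegrable (fun x : ℝ => x^a) volume 0 t :=
      (Continuous.intervalIntegrable (by continuity) _ _)
    have hIBP := intervalIntegral.integral_mul_deriv_eq_deriv_mul hu hv hu' hv'
    have hcomm : ∫ s in (0:ℝ)..t, s^a * (t-s)^(b+1)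
        = ∫ s in (0:ℝ)..t, (t-s)^(b+1) * s^a :=
      intervalIntegral.integral_congr (fun x _ => mul_comm _ _)
    rw [hcomm, hIBP]
    have hre : ∀ x : ℝ, -(((b:ℝ)+1) * (t-x)^b) * (x^(a+1)/((a:ℝ)+1))
        = (-(((b:ℝ)+1)/((a:ℝ)+1))) * (x^(a+1) * (t-x)^b) := by
      intro x; field_simp
    rw [intervalIntegral.integral_congr (fun x _ => hre x),
      intervalIntegral.integral_const_mul, ih (a+1) ht]
    rw [show a+1+b+1 = a+(b+1)+1 by ring]
    rw [sub_self, zero_pow (by omega : b + 1 ≠ 0), Nat.factorial_succ (a:ℕ),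
      Nat.factorial_succ b]
    push_cast
    have hfac : ((a+(b+1)+1).factorial : ℝ) ≠ 0 := by positivity
    field_simp
    ring

lemma exp_neg_tsum (s : ℝ) : Real.exp (-s) = ∑' j : ℕ, (-s)^j / j.factorial := by
  rw [Real.exp_eq_exp_ℝ, NormedSpace.exp_eq_tsum_div]

lemma hasSum_exp_integral (p b : ℕ) {t : ℝ} (ht : 0 < t) :
    HasSum (fun j : ℕ => ((-1:ℝ)^j / j.factorial) * ∫ s in (0:ℝ)..t, s^(p+j) * (t-s)^b)
      (∫ s in (0:ℝ)..t, s^p * Real.exp (-s) * (t-s)^b) := by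
  set μ := volume.restrict (Ioc (0:ℝ) t) with hμ
  set F : ℕ → ℝ → ℝ := fun j s => ((-1:ℝ)^j / j.factorial) * (s^(p+j) * (t-s)^b) with hF
  have hInt : ∀ j, Integrable (F j) μ := by
    intro j
    exact (Continuous.integrableOn_Ioc (by continuity))
  have hbound : ∀ j, (∫ s, ‖F j s‖ ∂μ) ≤ t^(p+b+1) * (t^j / j.factorial) := by
    intro j
    have h1 : ‖∫ s, ‖F j s‖ ∂μ‖ ≤ (t^(p+j) * t^b / j.factorial) * (volume (Ioc (0:ℝ) t)).toReal := by
      apply MeasureTheory.norm_setIntegral_le_of_norm_le_const (by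
          rw [Real.volume_Ioc]; exact ENNReal.ofReal_lt_top)
      intro x hx
      simp only [Real.norm_eq_abs, abs_abs]
      rw [hF, abs_mul, abs_mul, abs_div, abs_pow, abs_neg, abs_one, one_pow, abs_pow, abs_pow]
      rw [Nat.abs_cast]
      have hx1 : 0 < x := hx.1
      have hx2 : x ≤ t := hx.2
      have h1 : |x| ≤ t := by rw [abs_of_pos hx1]; exact hx2
      have h2 : |t - x| ≤ t := by rw [abs_of_nonneg (by linarith)]; linarith
      calc 1 / (j.factorial : ℝ) * (|x|^(p+j) * |t-x|^b)
          ≤ 1 / (j.factorial : ℝ) * (t^(p+j) * t^b) := by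
            apply mul_le_mul_of_nonneg_left _ (by positivity)
            exact mul_le_mul (pow_le_pow_left₀ (abs_nonneg _) h1 _)
              (pow_le_pow_left₀ (abs_nonneg _) h2 _) (by positivity) (by positivity)
        _ = t^(p+j) * t^b / j.factorial := by ring
    have h2 : (volume (Ioc (0:ℝ) t)).toReal = t := by
      rw [Real.volume_Ioc, ENNReal.toReal_ofReal (by linarith), sub_zero]
    rw [h2] at h1
    calc (∫ s, ‖F j s‖ ∂μ) ≤ ‖∫ s, ‖F j s‖ ∂μ‖ := le_abs_self _
      _ ≤ (t^(p+j) * t^b / j.factorial) * t := h1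
      _ = t^(p+b+1) * (t^j / j.factorial) := by rw [pow_add, pow_add, pow_add]; ring
  have hSum : Summable (fun j => ∫ s, ‖F j s‖ ∂μ) := by
    apply Summable.of_nonneg_of_le
      (fun j => integral_nonneg (fun s => norm_nonneg _)) hbound
    exact (Real.summable_pow_div_factorial t).mul_left _
  have H := MeasureTheory.hasSum_integral_of_summable_integral_norm hInt hSum
  have heq1 : ∀ j, (∫ s, F j s ∂μ) = ((-1:ℝ)^j / j.factorial) * ∫ s in (0:ℝ)..t, s^(p+j) * (t-s)^b := by
    intro j
    rw [intervalIntegral.integral_of_le ht.le, hF]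
    exact integral_const_mul _ _
  have heq2 : (∫ s, (∑' j, F j s) ∂μ) = ∫ s in (0:ℝ)..t, s^p * Real.exp (-s) * (t-s)^b := by
    rw [intervalIntegral.integral_of_le ht.le]
    apply MeasureTheory.integral_congr_ae
    filter_upwards with s
    rw [hF]
    have : ∀ j : ℕ, ((-1:ℝ)^j / j.factorial) * (s^(p+j) * (t-s)^b)
        = ((-s)^j / j.factorial) * (s^p * (t-s)^b) := by
      intro j
      rw [neg_pow, pow_add]
      ring
    simp_rw [this]
    rw [tsum_mul_right, ← exp_neg_tsum]
    ring
  rw [← heq2]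
  exact H.congr_fun (fun j => (heq1 j).symm)

/-- `(1/t)∫₀^t s e^{-s} e_ν(s) (t−s)^{k−1} ds = ((ν+1)/(k(k+1))) tᵏ ₁F₁(ν+2;k+2;−t)`. -/
theorem laguerre_convolution_hypergeometric (ν k : ℕ) (hk : 1 ≤ k) (t : ℝ) (ht : 0 < t) :
    (1/t) * ∫ s in (0:ℝ)..t, s * Real.exp (-s) * lagE ν s * (t-s)^(k-1)
      = ((ν+1 : ℝ)/(k*(k+1))) * t^k * hyp1F1 (ν+2) (k+2) (-t) := by
  obtain ⟨b, rfl⟩ : ∃ b, k = b + 1 := ⟨k-1, by omega⟩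
  simp only [Nat.add_sub_cancel]
  set c : ℕ → ℝ := fun m => (Nat.choose (ν+1) (ν-m) : ℝ) * (-1)^m / m.factorial with hc
  set I : ℕ → ℝ := fun m => ∫ s in (0:ℝ)..t, s^(m+1) * Real.exp (-s) * (t-s)^b with hI
  have step1 : (∫ s in (0:ℝ)..t, s * Real.exp (-s) * lagE ν s * (t-s)^b)
      = ∑ m ∈ Finset.range (ν+1), c m * I m := by
    have hpt : ∀ s : ℝ, s * Real.exp (-s) * lagE ν s * (t-s)^b
        = ∑ m ∈ Finset.range (ν+1), c m * (s^(m+1) * Real.exp (-s) * (t-s)^b) := by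
      intro s
      simp only [lagE, Finset.mul_sum, Finset.sum_mul]
      refine Finset.sum_congr rfl fun m _ => ?_
      simp only [hc]
      ring
    rw [intervalIntegral.integral_congr (fun s _ => hpt s),
        intervalIntegral.integral_finset_sum (fun m _ =>
          (Continuous.intervalIntegrable (by continuity) _ _))]
    exact Finset.sum_congr rfl fun m _ => intervalIntegral.integral_const_mul _ _
  set G : ℕ → ℕ → ℝ := fun m n =>
    ((Nat.choose (ν+1) (ν-m) * Nat.choose n m : ℕ) : ℝ) *
      ((-1)^n * (n+1).factorial * b.factorial / (n.factorial * (n+b+2).factorial) * t^(n+b+2))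
    with hG
  have step3 : ∀ m, HasSum (G m) (c m * I m) := by
    intro m
    have h2 := (hasSum_exp_integral (m+1) b ht).mul_left (c m)
    have h3 : ∀ j, G m (m + j)
        = c m * (((-1:ℝ)^j / j.factorial) * ∫ s in (0:ℝ)..t, s^(m+1+j) * (t-s)^b) := by
      intro j
      rw [beta_nat b (m+1+j) ht.le]
      have hch : (Nat.choose (m+j) m : ℝ) * ((m.factorial:ℝ) * j.factorial)
          = (m+j).factorial := by
        have h0 := Nat.choose_mul_factorial_mul_factorial (show m ≤ m+j by omega)
        have h2' : m + j - m = j := by omega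
        rw [h2'] at h0
        exact_mod_cast by rw [← h0]; ring
      simp only [hG, hc]
      rw [show m+1+j = m+j+1 by omega, show m+j+1+b+1 = m+j+b+2 by omega]
      push_cast
      push_cast at hch
      have hne1 : (m.factorial : ℝ) ≠ 0 := by positivity
      have hne2 : (j.factorial : ℝ) ≠ 0 := by positivity
      have hne3 : ((m+j).factorial : ℝ) ≠ 0 := by positivity
      have hC : (Nat.choose (m+j) m : ℝ) = (m+j).factorial / (m.factorial * j.factorial) := by
        field_simp
        linarith [hch]
      rw [hC, pow_add]
      field_simp
    have hsupp : ∀ n, n ∉ Set.range (fun j : ℕ => m + j) → G m n = 0 := by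
      intro n hn
      have hlt : n < m := by
        by_contra h
        exact hn ⟨n - m, by show m + (n - m) = n; omega⟩
      simp only [hG, Nat.choose_eq_zero_of_lt hlt, mul_zero, Nat.cast_zero, zero_mul]
    have hinj : Function.Injective (fun j : ℕ => m + j) := add_right_injective m
    exact (hinj.hasSum_iff hsupp).mp (h2.congr_fun (fun j => h3 j))
  have step4 : HasSum (fun n => ∑ m ∈ Finset.range (ν+1), G m n)
      (∑ m ∈ Finset.range (ν+1), c m * I m) := hasSum_sum (fun m _ => step3 m)
  set K : ℝ := ((ν:ℝ)+1)/(((b+1:ℕ):ℝ) * (((b+1:ℕ):ℝ)+1)) * t^(b+1) * t with hK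
  have step5 : ∀ n, (∑ m ∈ Finset.range (ν+1), G m n)
      = K * (poch ((ν:ℝ)+2) n / poch (((b+1:ℕ):ℝ)+2) n * (-t)^n / n.factorial) := by
    intro n
    simp only [hG]
    rw [← Finset.sum_mul, ← Nat.cast_sum, vandermonde_special]
    have e1 : ((ν:ℝ)+2) = ((ν+1:ℕ):ℝ)+1 := by push_cast; ring
    have e2 : ((((b+1:ℕ)):ℝ)+2) = ((b+2:ℕ):ℝ)+1 := by push_cast; ring
    rw [e1, e2, poch_nat_cast, poch_nat_cast,
      show ν+1+n = ν+n+1 by omega, show b+2+n = n+b+2 by omega]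
    have hc2 := choose_fac ν n
    rw [← hc2]
    have hb2 : ((b+2).factorial:ℝ) = ((b:ℝ)+2)*((b:ℝ)+1)*b.factorial := by
      rw [Nat.factorial_succ, Nat.factorial_succ]; push_cast; ring
    have hν1 : ((ν+1).factorial:ℝ) = ((ν:ℝ)+1)*ν.factorial := by
      rw [Nat.factorial_succ]; push_cast; ring
    have hpow : t^(n+b+2) = t^n * t^(b+1) * t := by
      rw [show n+b+2 = n+(b+1)+1 by omega, pow_add, pow_add, pow_one]
    rw [hb2, hν1, hK, neg_pow, hpow]
    push_cast
    have hne1 : (n.factorial:ℝ) ≠ 0 := by positivity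
    have hne2 : ((n+b+2).factorial:ℝ) ≠ 0 := by positivity
    have hne3 : (b.factorial:ℝ) ≠ 0 := by positivity
    have hne4 : (ν.factorial:ℝ) ≠ 0 := by positivity
    have hne5 : ((b:ℝ)+1) ≠ 0 := by positivity
    have hne6 : ((b:ℝ)+2) ≠ 0 := by positivity
    have hne7 : ((ν:ℝ)+1) ≠ 0 := by positivity
    field_simp
    ring
  have step6 : (∫ s in (0:ℝ)..t, s * Real.exp (-s) * lagE ν s * (t-s)^b)
      = K * hyp1F1 ((ν:ℝ)+2) (((b+1:ℕ):ℝ)+2) (-t) := by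
    have h := (step4.congr_fun (fun n => (step5 n).symm)).tsum_eq
    rw [step1, ← h, tsum_mul_left, hyp1F1]
  rw [step6, hK]
  have ht' : t ≠ 0 := ne_of_gt ht
  push_cast
  field_simp
end

section
/- For every n ≥ 0 and a > 0, ∫₀^∞ e^{-u} ∫₀^{u/a} e_{2n}(v)² dv du = Σ_{i,j=0}^{2n} C(2n+1, 2n−i) C(2n+1, 2n−j) ((−1)^{i+j} / a^{i+j+1}) C(i+j, i). -/
open Set MeasureTheory Real intervalIntegral

lemma exp_poly_integrable (k : ℕ) :
    IntegrableOn (fun u : ℝ => Real.exp (-u) * u ^ k) (Ioi 0) := by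
  have h := Real.GammaIntegral_convergent (s := (k : ℝ) + 1) (by positivity)
  refine h.congr_fun (fun x hx => ?_) measurableSet_Ioi
  rw [add_sub_cancel_right]
  simp only [Real.rpow_natCast]

lemma integral_exp_poly (k : ℕ) :
    ∫ u in Ioi (0:ℝ), Real.exp (-u) * u ^ k = k.factorial := by
  have h := Real.Gamma_eq_integral (s := (k : ℝ) + 1) (by positivity)
  rw [add_sub_cancel_right] at h
  have h2 : Real.Gamma ((k : ℝ) + 1) = k.factorial := Real.Gamma_nat_eq_factorial k
  rw [h2] at h
  have h3 : ∫ u in Ioi (0:ℝ), Real.exp (-u) * u ^ k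
      = ∫ u in Ioi (0:ℝ), Real.exp (-u) * u ^ ((k:ℝ)) :=
    setIntegral_congr_fun measurableSet_Ioi fun x hx => by rw [Real.rpow_natCast]
  rw [h3, ← h]

/-- Explicit evaluation of `∫₀^∞ e^{−u} ∫₀^{u/a} e_{2n}(v)² dv du` as a double sum. -/
theorem laguerre_double_integral (n : ℕ) (a : ℝ) (ha : 0 < a) :
    ∫ u in Ioi (0:ℝ), Real.exp (-u) * ∫ v in (0:ℝ)..(u/a), (lagE (2*n) v)^2
      = ∑ i ∈ Finset.range (2*n+1), ∑ j ∈ Finset.range (2*n+1),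
          (Nat.choose (2*n+1) (2*n-i) : ℝ) * (Nat.choose (2*n+1) (2*n-j) : ℝ) *
            ((-1)^(i+j) / a^(i+j+1)) * (Nat.choose (i+j) i : ℝ) := by
  set N := 2*n with hN
  set c : ℕ → ℝ := fun i => (Nat.choose (N+1) (N-i) : ℝ) with hc
  -- Step 1: inner integral
  have inner : ∀ x : ℝ, (∫ v in (0:ℝ)..x, (lagE N v)^2)
      = ∑ i ∈ Finset.range (N+1), ∑ j ∈ Finset.range (N+1),
          c i * c j * ((-1)^(i+j) * x^(i+j+1) /
            ((i+j+1) * (Nat.factorial i) * (Nat.factorial j))) := by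
    intro x
    have expand : ∀ v : ℝ, (lagE N v)^2
        = ∑ i ∈ Finset.range (N+1), ∑ j ∈ Finset.range (N+1),
            c i * c j * ((-1)^(i+j) * v^(i+j) /
              ((Nat.factorial i) * (Nat.factorial j))) := by
      intro v
      rw [lagE, sq, Finset.sum_mul_sum]
      refine Finset.sum_congr rfl fun i _ => Finset.sum_congr rfl fun j _ => ?_
      rw [neg_pow, neg_pow, pow_add]
      field_simp [c]
      ring
    simp_rw [expand]
    rw [intervalIntegral.integral_finset_sum]
    · refine Finset.sum_congr rfl fun i _ => ?_
      rw [intervalIntegral.integral_finset_sum]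
      · refine Finset.sum_congr rfl fun j _ => ?_
        simp_rw [div_eq_mul_inv, mul_assoc]
        rw [intervalIntegral.integral_const_mul, intervalIntegral.integral_const_mul,
          intervalIntegral.integral_const_mul, intervalIntegral.integral_mul_const,
          integral_pow]
        simp only [zero_pow (Nat.succ_ne_zero _), sub_zero]
        have h1 : ((i:ℝ)+j+1) ≠ 0 := by positivity
        have h2 : (Nat.factorial i : ℝ) ≠ 0 := by positivity
        have h3 : (Nat.factorial j : ℝ) ≠ 0 := by positivity
        push_cast
        field_simp
        try ring
      · intro j _
        exact (Continuous.intervalIntegrable (by continuity) _ _)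
    · intro i _
      refine Continuous.intervalIntegrable ?_ _ _
      exact continuous_finset_sum _ fun j _ => by continuity
  simp_rw [inner]
  -- Step 2: outer integral
  have key : ∀ u : ℝ, Real.exp (-u) * (∑ i ∈ Finset.range (N+1), ∑ j ∈ Finset.range (N+1),
        c i * c j * ((-1)^(i+j) * (u/a)^(i+j+1) /
          ((i+j+1) * (Nat.factorial i) * (Nat.factorial j))))
      = ∑ i ∈ Finset.range (N+1), ∑ j ∈ Finset.range (N+1),
          (c i * c j * ((-1)^(i+j) /
            (a^(i+j+1) * (i+j+1) * (Nat.factorial i) * (Nat.factorial j)))) *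
            (Real.exp (-u) * u^(i+j+1)) := by
    intro u
    rw [Finset.mul_sum]
    refine Finset.sum_congr rfl fun i _ => ?_
    rw [Finset.mul_sum]
    refine Finset.sum_congr rfl fun j _ => ?_
    rw [div_pow]
    field_simp
  simp_rw [key]
  rw [MeasureTheory.integral_finset_sum]
  · refine Finset.sum_congr rfl fun i hi => ?_
    rw [MeasureTheory.integral_finset_sum]
    · refine Finset.sum_congr rfl fun j hj => ?_
      rw [MeasureTheory.integral_const_mul, integral_exp_poly]
      have hchoose : ((i+j).choose i : ℝ) * (Nat.factorial i) * (Nat.factorial j)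
          = ((i+j).factorial : ℝ) := by
        have := Nat.add_choose_mul_factorial_mul_factorial i j
        have h2 : (i+j).choose i = (i+j).choose j := by
          rw [← Nat.choose_symm (Nat.le_add_right i j), Nat.add_sub_cancel_left]
        rw [h2]
        exact_mod_cast congrArg (Nat.cast (R := ℝ)) this
      have hfact : ((i+j+1).factorial : ℝ) = (i+j+1) * (i+j).factorial := by
        exact_mod_cast congrArg (Nat.cast (R := ℝ)) (Nat.factorial_succ (i+j))
      rw [hfact, ← hchoose]
      have hi' : (Nat.factorial i : ℝ) ≠ 0 := by positivity
      have hj' : (Nat.factorial j : ℝ) ≠ 0 := by positivity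
      have hk : ((i:ℝ)+j+1) ≠ 0 := by positivity
      have ha' : a^(i+j+1) ≠ 0 := by positivity
      field_simp [c]
      ring
    · intro j _
      exact (exp_poly_integrable (i+j+1)).const_mul _
  · intro i _
    refine integrable_finset_sum _ fun j _ => ?_
    exact (exp_poly_integrable (i+j+1)).const_mul _
end

section
/- For every n ≥ 0 and a > 0, ∫₀^∞ e^{-u} ∫₀^{u/a} e_{2n}(v)² dv du ≤ (2n+1)² · 2^{4(2n+1)} · max{ a^{-s} : s = 1, …, 4n+1 }. -/
open Set MeasureTheory Real intervalIntegral

lemma myChoose_le_two_pow (n k : ℕ) : n.choose k ≤ 2^n := by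
  rcases le_or_gt k n with h | h
  · calc n.choose k ≤ ∑ i ∈ Finset.range (n+1), n.choose i :=
        Finset.single_le_sum (fun i _ => Nat.zero_le _) (Finset.mem_range.2 (by omega))
      _ = 2^n := Nat.sum_range_choose n
  · simp [Nat.choose_eq_zero_of_lt h]

lemma integrableOn_exp_neg_pow (k : ℕ) :
    IntegrableOn (fun x : ℝ => Real.exp (-x) * x ^ k) (Ioi 0) := by
  have h := Real.GammaIntegral_convergent (s := (k:ℝ)+1) (by positivity)
  refine h.congr_fun (fun x hx => ?_) measurableSet_Ioi
  simp only [add_sub_cancel_right, Real.rpow_natCast]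

lemma integral_exp_neg_pow (k : ℕ) :
    ∫ x in Ioi (0:ℝ), Real.exp (-x) * x ^ k = k.factorial := by
  have h := Real.Gamma_eq_integral (s := (k:ℝ)+1) (by positivity)
  rw [Real.Gamma_nat_eq_factorial] at h
  rw [h]
  refine setIntegral_congr_fun measurableSet_Ioi fun x hx => ?_
  rw [add_sub_cancel_right, Real.rpow_natCast]

lemma continuous_lagE (ν : ℕ) : Continuous (lagE ν) := by
  unfold lagE
  exact continuous_finset_sum _ fun m _ => by fun_prop

lemma lagE_term_sq (c : ℝ) (m : ℕ) (v f : ℝ) :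
    (c * (-v)^m / f)^2 = c^2 * (v^(2*m) / f^2) := by
  have h : ((-v)^m)^2 = v^(2*m) := by
    rw [← pow_mul, mul_comm m 2, pow_mul, neg_sq, ← pow_mul]
  rw [div_pow, mul_pow, h]; ring

lemma lagE_sq_le (n : ℕ) (v : ℝ) :
    (lagE (2*n) v)^2 ≤ (2*n+1 : ℝ) * 2^(2*(2*n+1)) *
      ∑ m ∈ Finset.range (2*n+1), v^(2*m) / ((m.factorial:ℝ))^2 := by
  unfold lagE
  calc (∑ m ∈ Finset.range (2*n+1), (Nat.choose (2*n+1) (2*n-m) : ℝ) * (-v)^m / m.factorial)^2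
      ≤ (Finset.range (2*n+1)).card *
        ∑ m ∈ Finset.range (2*n+1), ((Nat.choose (2*n+1) (2*n-m) : ℝ) * (-v)^m / m.factorial)^2 :=
        sq_sum_le_card_mul_sum_sq
    _ ≤ (2*n+1 : ℝ) * ∑ m ∈ Finset.range (2*n+1), 2^(2*(2*n+1)) * (v^(2*m) / ((m.factorial:ℝ))^2) := by
        rw [Finset.card_range]
        push_cast
        refine mul_le_mul_of_nonneg_left (Finset.sum_le_sum fun m hm => ?_) (by positivity)
        rw [lagE_term_sq]
        have hc : (Nat.choose (2*n+1) (2*n-m) : ℝ) ≤ 2^(2*n+1) := by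
          exact_mod_cast Nat.cast_le.mpr (myChoose_le_two_pow (2*n+1) (2*n-m))
        have hc2 : (Nat.choose (2*n+1) (2*n-m) : ℝ)^2 ≤ (2:ℝ)^(2*(2*n+1)) := by
          calc (Nat.choose (2*n+1) (2*n-m) : ℝ)^2 ≤ ((2:ℝ)^(2*n+1))^2 := by
                apply pow_le_pow_left₀ (by positivity) hc _
            _ = (2:ℝ)^(2*(2*n+1)) := by rw [← pow_mul, mul_comm]
        have : (0:ℝ) ≤ v^(2*m) / ((m.factorial:ℝ))^2 := by rw [pow_mul]; positivity
        exact mul_le_mul_of_nonneg_right hc2 this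
    _ = (2*n+1 : ℝ) * 2^(2*(2*n+1)) *
        ∑ m ∈ Finset.range (2*n+1), v^(2*m) / ((m.factorial:ℝ))^2 := by
        rw [← Finset.mul_sum, mul_assoc]

lemma inner_bound (n : ℕ) {T : ℝ} (hT : 0 ≤ T) :
    ∫ v in (0:ℝ)..T, (lagE (2*n) v)^2 ≤
      (2*n+1:ℝ) * 2^(2*(2*n+1)) *
        ∑ m ∈ Finset.range (2*n+1), T^(2*m+1) / ((2*m+1 : ℝ) * ((m.factorial:ℝ))^2) := by
  have hcont : Continuous fun v : ℝ => (lagE (2*n) v)^2 := (continuous_lagE _).pow 2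
  have hgc : Continuous fun v : ℝ => (2*n+1:ℝ) * 2^(2*(2*n+1)) *
      ∑ m ∈ Finset.range (2*n+1), v^(2*m) / ((m.factorial:ℝ))^2 :=
    continuous_const.mul (continuous_finset_sum _ fun m _ => (continuous_pow _).div_const _)
  have step1 : ∫ v in (0:ℝ)..T, (lagE (2*n) v)^2 ≤
      ∫ v in (0:ℝ)..T, (2*n+1:ℝ) * 2^(2*(2*n+1)) *
        ∑ m ∈ Finset.range (2*n+1), v^(2*m) / ((m.factorial:ℝ))^2 :=
    intervalIntegral.integral_mono_on hT (hcont.intervalIntegrable _ _)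
      (hgc.intervalIntegrable _ _) (fun v _ => lagE_sq_le n v)
  refine step1.trans (le_of_eq ?_)
  rw [intervalIntegral.integral_const_mul]
  congr 1
  rw [intervalIntegral.integral_finset_sum
    (fun m _ => (((continuous_pow _).div_const _).intervalIntegrable _ _))]
  refine Finset.sum_congr rfl fun m _ => ?_
  rw [intervalIntegral.integral_div, integral_pow]
  rw [zero_pow (by omega), sub_zero, div_div]
  norm_num

/-- `∫₀^∞ e^{−u} ∫₀^{u/a} e_{2n}(v)² dv du ≤ (2n+1)² 2^{4(2n+1)} max{a^{−s} : 1 ≤ s ≤ 4n+1}`. -/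
theorem laguerre_double_integral_bound (n : ℕ) (a : ℝ) (ha : 0 < a) :
    ∫ u in Ioi (0:ℝ), Real.exp (-u) * ∫ v in (0:ℝ)..(u/a), (lagE (2*n) v)^2
      ≤ ((2*n+1 : ℝ))^2 * 2^(4*(2*n+1)) *
        (Finset.Icc 1 (4*n+1)).sup' (by simp) (fun s : ℕ => a^(-(s:ℤ))) := by
  set M := (Finset.Icc 1 (4*n+1)).sup' (by simp) (fun s : ℕ => a^(-(s:ℤ))) with hMdef
  have hM : ∀ m : ℕ, m ≤ 2*n → a^(-(2*m+1:ℕ):ℤ) ≤ M := fun m hm =>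
    Finset.le_sup' (fun s : ℕ => a^(-(s:ℤ))) (Finset.mem_Icc.2 ⟨by omega, by omega⟩)
  have hMpos : 0 < M := lt_of_lt_of_le (by positivity : (0:ℝ) < a^(-(1:ℕ):ℤ)) (by
    simpa using hM 0 (by omega))
  set C := (2*n+1:ℝ) * 2^(2*(2*n+1)) with hCdef
  have hCpos : 0 < C := by positivity
  set g : ℝ → ℝ := fun u => ∑ m ∈ Finset.range (2*n+1),
      C / ((2*m+1:ℝ) * ((m.factorial:ℝ))^2 * a^(2*m+1)) * (Real.exp (-u) * u^(2*m+1)) with hgdef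
  have hgint : Integrable g (volume.restrict (Ioi 0)) :=
    integrable_finset_sum _ fun m _ => (integrableOn_exp_neg_pow (2*m+1)).const_mul _
  have hfg : ∀ u ∈ Ioi (0:ℝ),
      Real.exp (-u) * ∫ v in (0:ℝ)..(u/a), (lagE (2*n) v)^2 ≤ g u := by
    intro u hu
    have hu0 : 0 < u := hu
    have hT : 0 ≤ u/a := by positivity
    calc Real.exp (-u) * ∫ v in (0:ℝ)..(u/a), (lagE (2*n) v)^2
        ≤ Real.exp (-u) * (C * ∑ m ∈ Finset.range (2*n+1),
            (u/a)^(2*m+1) / ((2*m+1 : ℝ) * ((m.factorial:ℝ))^2)) :=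
          mul_le_mul_of_nonneg_left (inner_bound n hT) (Real.exp_pos _).le
      _ = g u := by
          rw [hgdef, Finset.mul_sum, Finset.mul_sum]
          refine Finset.sum_congr rfl fun m _ => ?_
          rw [div_pow]
          have h1 : ((2*m+1:ℝ) * ((m.factorial:ℝ))^2) ≠ 0 := by positivity
          have h2 : a^(2*m+1) ≠ 0 := by positivity
          field_simp
  have hnonneg : ∀ u ∈ Ioi (0:ℝ),
      0 ≤ Real.exp (-u) * ∫ v in (0:ℝ)..(u/a), (lagE (2*n) v)^2 := by
    intro u hu
    have hu0 : 0 < u := hu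
    have hT : 0 ≤ u/a := by positivity
    exact mul_nonneg (Real.exp_pos _).le
      (intervalIntegral.integral_nonneg hT fun v _ => sq_nonneg _)
  have step1 : ∫ u in Ioi (0:ℝ), Real.exp (-u) * ∫ v in (0:ℝ)..(u/a), (lagE (2*n) v)^2
      ≤ ∫ u in Ioi (0:ℝ), g u :=
    integral_mono_of_nonneg
      ((ae_restrict_iff' measurableSet_Ioi).2 (Filter.Eventually.of_forall hnonneg))
      hgint
      ((ae_restrict_iff' measurableSet_Ioi).2 (Filter.Eventually.of_forall hfg))
  refine step1.trans ?_
  have step2 : ∫ u in Ioi (0:ℝ), g u = ∑ m ∈ Finset.range (2*n+1),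
      C / ((2*m+1:ℝ) * ((m.factorial:ℝ))^2 * a^(2*m+1)) * ((2*m+1).factorial : ℝ) := by
    rw [hgdef, integral_finset_sum _
      (fun m _ => (integrableOn_exp_neg_pow (2*m+1)).const_mul _)]
    refine Finset.sum_congr rfl fun m _ => ?_
    rw [MeasureTheory.integral_const_mul, integral_exp_neg_pow]
  rw [step2]
  have hterm : ∀ m ∈ Finset.range (2*n+1),
      C / ((2*m+1:ℝ) * ((m.factorial:ℝ))^2 * a^(2*m+1)) * ((2*m+1).factorial : ℝ)
        ≤ C * 2^(4*n) * M := by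
    intro m hm
    have hm' : m ≤ 2*n := by
      have := Finset.mem_range.1 hm; omega
    have hfact : ((2*m+1).factorial : ℝ) = (2*m+1:ℝ) * ((2*m).choose m : ℝ) * ((m.factorial:ℝ))^2 := by
      have h := Nat.choose_mul_factorial_mul_factorial (Nat.le_mul_of_pos_left m (by norm_num) : m ≤ 2*m)
      have hmm : 2*m - m = m := by omega
      rw [hmm] at h
      have h2m : (2*m).factorial = (2*m).choose m * m.factorial * m.factorial := h.symm
      have h3 : (2*m+1).factorial = (2*m+1) * ((2*m).choose m * m.factorial * m.factorial) := by
        rw [Nat.factorial_succ, h2m]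
      rw [h3]; push_cast; ring
    have heq : C / ((2*m+1:ℝ) * ((m.factorial:ℝ))^2 * a^(2*m+1)) * ((2*m+1).factorial : ℝ)
        = C * ((2*m).choose m : ℝ) * a^(-(2*m+1:ℕ):ℤ) := by
      rw [hfact, zpow_neg, zpow_natCast]
      set_option linter.unusedTactic false in
      have h1 : (2*m+1:ℝ) ≠ 0 := by positivity
      have h2 : ((m.factorial:ℝ))^2 ≠ 0 := by positivity
      have h3 : a^(2*m+1) ≠ 0 := by positivity
      field_simp
    rw [heq]
    have hch : ((2*m).choose m : ℝ) ≤ 2^(4*n) := by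
      calc ((2*m).choose m : ℝ) ≤ (2:ℝ)^(2*m) := by
            exact_mod_cast Nat.cast_le.mpr (myChoose_le_two_pow (2*m) m)
        _ ≤ (2:ℝ)^(4*n) := by
            apply pow_le_pow_right₀ one_le_two; omega
    calc C * ((2*m).choose m : ℝ) * a^(-(2*m+1:ℕ):ℤ)
        ≤ C * 2^(4*n) * a^(-(2*m+1:ℕ):ℤ) := by
          apply mul_le_mul_of_nonneg_right (mul_le_mul_of_nonneg_left hch hCpos.le)
          positivity
      _ ≤ C * 2^(4*n) * M := by
          apply mul_le_mul_of_nonneg_left (hM m hm') (by positivity)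
  calc ∑ m ∈ Finset.range (2*n+1),
      C / ((2*m+1:ℝ) * ((m.factorial:ℝ))^2 * a^(2*m+1)) * ((2*m+1).factorial : ℝ)
      ≤ ∑ m ∈ Finset.range (2*n+1), C * 2^(4*n) * M := Finset.sum_le_sum hterm
    _ = (2*n+1:ℝ) * (C * 2^(4*n) * M) := by
        rw [Finset.sum_const, Finset.card_range]; push_cast; ring
    _ ≤ ((2*n+1 : ℝ))^2 * 2^(4*(2*n+1)) * M := by
        rw [hCdef]
        have h2 : (2:ℝ)^(2*(2*n+1)) * 2^(4*n) ≤ 2^(4*(2*n+1)) := by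
          rw [← pow_add]
          apply pow_le_pow_right₀ one_le_two; omega
        calc (2*n+1:ℝ) * ((2*n+1:ℝ) * 2^(2*(2*n+1)) * 2^(4*n) * M)
            = ((2*n+1:ℝ))^2 * ((2:ℝ)^(2*(2*n+1)) * 2^(4*n)) * M := by ring
          _ ≤ ((2*n+1 : ℝ))^2 * 2^(4*(2*n+1)) * M := by
              apply mul_le_mul_of_nonneg_right
                (mul_le_mul_of_nonneg_left h2 (by positivity)) hMpos.le
end
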